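/- arXiv:2310.13835 — 8 statements merged into one kernel-verified Lean document; each statement's English description precedes it below -/
import Mathlib

section
/- Let P be a finite lattice and R a transfer system on P. Then the characteristic function χ^R : P → P, sending x to the least element of x↓_R = {y ∈ P | y R x}, is monotone: x ≤ y implies χ^R(x) ≤ χ^R(y). -/
/-- A transfer system on a lattice `P`: a partial order refining `≤`
(reflexive, transitive, and refining `≤`, hence antisymmetric) that is
closed under restriction. -/
structure TransferSystem (P : Type*) [Lattice P] where
  rel : P → P → Prop
  refl : ∀ x, rel x x
  trans : ∀ x y z, rel x y → rel y z → rel x z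
  le_of_rel : ∀ x y, rel x y → x ≤ y
  restrict : ∀ x y z, rel x z → y ≤ z → rel (x ⊓ y) y

/-- the characteristic function of a transfer system on a finite
lattice (sending each x to the least element of its R-downset) is monotone. -/
theorem stmt1 {P : Type*} [Lattice P] [Finite P] (R : TransferSystem P) (χ : P → P)
    (hχ : ∀ x, IsLeast {y : P | R.rel y x} (χ x)) :
    Monotone χ := by
  intro x y hxy
  have h1 : R.rel (χ y ⊓ x) x := R.restrict _ _ _ (hχ y).1 hxy
  exact le_trans ((hχ x).2 h1) inf_le_left
end

section
/- Let P be a finite lattice. For every transfer system R on P, the characteristic function χ^R is an interior operator on P; conversely, for every interior operator f on P there exists a transfer system R on P with χ^R = f. That is, the image of the map χ : Tr(P) → End(P), R ↦ χ^R, is exactly the set End°(P) of interior operators on P. -/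
/-- the image of the characteristic map χ : Tr(P) → End(P) is
exactly the set of interior operators on P: every characteristic function of
a transfer system is monotone, idempotent, and contractive, and conversely
every interior operator arises as the characteristic function of some
transfer system. -/
theorem stmt4 (P : Type*) [Lattice P] [Finite P] :
    (∀ (R : TransferSystem P) (χ : P → P),
        (∀ x, IsLeast {y : P | R.rel y x} (χ x)) →
        Monotone χ ∧ (∀ x, χ (χ x) = χ x) ∧ (∀ x, χ x ≤ x)) ∧
    (∀ f : P → P, Monotone f → (∀ x, f (f x) = f x) → (∀ x, f x ≤ x) →
        ∃ R : TransferSystem P, ∀ x, IsLeast {y : P | R.rel y x} (f x)) := by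
  constructor
  · intro R χ h
    have hrel : ∀ x, R.rel (χ x) x := fun x => (h x).1
    have hlow : ∀ x y, R.rel y x → χ x ≤ y := fun x y hy => (h x).2 hy
    have hle : ∀ x, χ x ≤ x := fun x => R.le_of_rel _ _ (hrel x)
    refine ⟨?_, ?_, hle⟩
    · intro x y hxy
      have h1 : R.rel (χ y ⊓ x) x := R.restrict _ _ _ (hrel y) hxy
      calc χ x ≤ χ y ⊓ x := hlow _ _ h1
        _ ≤ χ y := inf_le_left
    · intro x
      refine le_antisymm ?_ ?_
      · exact hlow _ _ (R.refl _)
      · exact hlow _ _ (R.trans _ _ _ (hrel (χ x)) (hrel x))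
  · intro f hmono hidem hcontr
    refine ⟨⟨fun a b => f b ≤ a ∧ a ≤ b, fun x => ⟨hcontr x, le_rfl⟩,
      fun x y z hxy hyz => ⟨?_, hxy.2.trans hyz.2⟩,
      fun x y h => h.2,
      fun x y z hxz hyz => ⟨le_inf ?_ (hcontr y), inf_le_right⟩⟩, ?_⟩
    · calc f z = f (f z) := (hidem z).symm
        _ ≤ f y := hmono hyz.1
        _ ≤ x := hxy.1
    · calc f y ≤ f z := hmono hyz
        _ ≤ x := hxz.1
    · intro x
      exact ⟨⟨le_rfl, hcontr x⟩, fun y hy => hy.1⟩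
end

section
/- Let P be a finite lattice and let R, R' be transfer systems on P with χ^R = χ^{R'}. Then χ^{R ∨ R'} = χ^R = χ^{R'}, where R ∨ R' denotes the join of R and R' in the lattice Tr(P) of transfer systems (i.e., the least transfer system containing both R and R'). -/
/-- if two transfer systems R, R' on a finite lattice have the
same characteristic function, then so does their join R ∨ R' in Tr(P)
(the least transfer system containing both). -/
theorem stmt5 {P : Type*} [Lattice P] [Finite P] (R R' S : TransferSystem P)
    (hSR : ∀ x y, R.rel x y → S.rel x y)
    (hSR' : ∀ x y, R'.rel x y → S.rel x y)
    (hSleast : ∀ T : TransferSystem P, (∀ x y, R.rel x y → T.rel x y) →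
        (∀ x y, R'.rel x y → T.rel x y) → ∀ x y, S.rel x y → T.rel x y)
    (χR χR' χS : P → P)
    (hχR : ∀ x, IsLeast {y : P | R.rel y x} (χR x))
    (hχR' : ∀ x, IsLeast {y : P | R'.rel y x} (χR' x))
    (hχS : ∀ x, IsLeast {y : P | S.rel y x} (χS x))
    (heq : χR = χR') :
    χS = χR ∧ χS = χR' := by
  -- basic facts about χR
  have χle : ∀ x, χR x ≤ x := fun x => R.le_of_rel _ _ (hχR x).1
  have mono : ∀ a b, a ≤ b → χR a ≤ χR b := by
    intro a b h
    have h1 : R.rel (χR b ⊓ a) a := R.restrict _ _ _ (hχR b).1 h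
    exact le_trans ((hχR a).2 h1) inf_le_left
  have idem : ∀ x, χR (χR x) = χR x := by
    intro x
    refine le_antisymm (χle _) ?_
    exact (hχR x).2 (R.trans _ _ _ (hχR (χR x)).1 (hχR x).1)
  have eqR : ∀ a b, R.rel a b → χR a = χR b := by
    intro a b h
    refine le_antisymm (mono _ _ (R.le_of_rel _ _ h)) ?_
    exact (hχR b).2 (R.trans _ _ _ (hχR a).1 h)
  -- same for R', transported through heq
  have eqR' : ∀ a b, R'.rel a b → χR a = χR b := by
    intro a b h
    rw [heq]
    refine le_antisymm ?_ ((hχR' b).2 (R'.trans _ _ _ (hχR' a).1 h))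
    have h1 : R'.rel (χR' b ⊓ a) a := R'.restrict _ _ _ (hχR' b).1 (R'.le_of_rel _ _ h)
    exact le_trans ((hχR' a).2 h1) inf_le_left
  -- the big transfer system with the same characteristic function
  let T : TransferSystem P :=
    { rel := fun a b => a ≤ b ∧ χR a = χR b
      refl := fun x => ⟨le_rfl, rfl⟩
      trans := fun x y z h1 h2 => ⟨h1.1.trans h2.1, h1.2.trans h2.2⟩
      le_of_rel := fun x y h => h.1
      restrict := by
        intro a b c h hbc
        refine ⟨inf_le_right, le_antisymm (mono _ _ inf_le_right) ?_⟩
        have hb : χR b ≤ a ⊓ b := by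
          refine le_inf ?_ (χle b)
          calc χR b ≤ χR c := mono _ _ hbc
            _ = χR a := h.2.symm
            _ ≤ a := χle a
        calc χR b = χR (χR b) := (idem b).symm
          _ ≤ χR (a ⊓ b) := mono _ _ hb }
  have hST : ∀ x y, S.rel x y → T.rel x y :=
    hSleast T (fun a b h => ⟨R.le_of_rel _ _ h, eqR a b h⟩)
      (fun a b h => ⟨R'.le_of_rel _ _ h, eqR' a b h⟩)
  have main : χS = χR := by
    funext x
    refine le_antisymm ((hχS x).2 (hSR _ _ (hχR x).1)) ?_
    have h1 : T.rel (χS x) x := hST _ _ (hχS x).1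
    calc χR x = χR (χS x) := h1.2.symm
      _ ≤ χS x := χle _
  exact ⟨main, heq ▸ main⟩
end

section
/- Let P be a finite lattice. For every transfer system R on P, the fiber {R' ∈ Tr(P) | χ^{R'} = χ^R} of the characteristic map has a greatest element (in the refinement order). Moreover, a transfer system R is the greatest element of its own fiber if and only if R is saturated; equivalently, the set of greatest elements of fibers of χ is exactly the set of saturated transfer systems on P, and the greatest element of the fiber of R is R_sat, the least saturated transfer system containing R. -/
/-- A transfer system is saturated when `x R y ≤ z` and `x R z` imply `y R z`. -/
def TransferSystem.Saturated {P : Type*} [Lattice P] (R : TransferSystem P) : Prop :=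
  ∀ x y z, R.rel x y → y ≤ z → R.rel x z → R.rel y z

namespace TSAux

variable {P : Type*} [Lattice P] {R : TransferSystem P} {m : P → P}

theorem chi_rel (h : ∀ x, IsLeast {y | R.rel y x} (m x)) (x : P) : R.rel (m x) x :=
  (h x).1

theorem chi_le (h : ∀ x, IsLeast {y | R.rel y x} (m x)) {x y : P} (hxy : R.rel x y) :
    m y ≤ x := (h y).2 hxy

theorem chi_eq_of_rel (h : ∀ x, IsLeast {y | R.rel y x} (m x)) {x y : P}
    (hxy : R.rel x y) : m x = m y := by
  have h1 : R.rel (m y) x := by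
    have := R.restrict (m y) x y (chi_rel h y) (R.le_of_rel _ _ hxy)
    rwa [inf_eq_left.2 (chi_le h hxy)] at this
  exact le_antisymm (chi_le h h1)
    (chi_le h (R.trans _ _ _ (chi_rel h x) hxy))

/-- The saturation of `R`: `x ≤ y` and `χ x = χ y`. -/
def sat (R : TransferSystem P) (m : P → P)
    (h : ∀ x, IsLeast {y | R.rel y x} (m x)) : TransferSystem P where
  rel x y := x ≤ y ∧ m x = m y
  refl x := ⟨le_rfl, rfl⟩
  trans x y z hxy hyz := ⟨hxy.1.trans hyz.1, hxy.2.trans hyz.2⟩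
  le_of_rel x y hxy := hxy.1
  restrict x y z hxz hyz := by
    refine ⟨inf_le_right, ?_⟩
    have r1 : R.rel (m z ⊓ y) y := R.restrict _ _ _ (chi_rel h z) hyz
    have hmz : m z ≤ x := by
      rw [← hxz.2]; exact R.le_of_rel _ _ (chi_rel h x)
    have hle : m z ⊓ y ≤ x ⊓ y := inf_le_inf_right y hmz
    have r2 : R.rel (m z ⊓ y) (x ⊓ y) := by
      have := R.restrict (m z ⊓ y) (x ⊓ y) y r1 inf_le_right
      rwa [inf_eq_left.2 hle] at this
    rw [← chi_eq_of_rel h r2]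
    exact chi_eq_of_rel h r1

theorem sat_saturated (R : TransferSystem P) (m : P → P)
    (h : ∀ x, IsLeast {y | R.rel y x} (m x)) : (sat R m h).Saturated := by
  rintro x y z ⟨_, h1⟩ hyz ⟨_, h2⟩
  exact ⟨hyz, h1.symm.trans h2⟩

theorem le_sat (R : TransferSystem P) (m : P → P)
    (h : ∀ x, IsLeast {y | R.rel y x} (m x)) {x y : P} (hxy : R.rel x y) :
    (sat R m h).rel x y := ⟨R.le_of_rel _ _ hxy, chi_eq_of_rel h hxy⟩

theorem sat_isLeast (R : TransferSystem P) (m : P → P)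
    (h : ∀ x, IsLeast {y | R.rel y x} (m x)) (x : P) :
    IsLeast {y | (sat R m h).rel y x} (m x) := by
  constructor
  · exact ⟨R.le_of_rel _ _ (chi_rel h x), chi_eq_of_rel h (chi_rel h x)⟩
  · rintro y ⟨_, hy⟩
    rw [← hy]; exact R.le_of_rel _ _ (chi_rel h y)

/-- A saturated system relates `x ≤ y` whenever `χ x = χ y`. -/
theorem rel_of_saturated (h : ∀ x, IsLeast {y | R.rel y x} (m x))
    (hsat : R.Saturated) {x y : P} (hxy : x ≤ y) (hm : m x = m y) : R.rel x y := by
  have h1 : R.rel (m x) y := by rw [hm]; exact chi_rel h y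
  exact hsat (m x) x y (chi_rel h x) hxy h1

end TSAux

open TSAux in
/-- every fiber of the characteristic map χ has a greatest
element; a transfer system is the greatest element of its own fiber iff it is
saturated; and the greatest element of the fiber of R is R_sat, the least
saturated transfer system containing R. -/
theorem stmt6 (P : Type*) [Lattice P] [Finite P]
    (chi : TransferSystem P → P → P)
    (hchi : ∀ (R : TransferSystem P) (x : P), IsLeast {y : P | R.rel y x} (chi R x)) :
    (∀ R : TransferSystem P, ∃ S : TransferSystem P, chi S = chi R ∧
        ∀ T : TransferSystem P, chi T = chi R → ∀ x y, T.rel x y → S.rel x y) ∧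
    (∀ R : TransferSystem P,
        (∀ T : TransferSystem P, chi T = chi R → ∀ x y, T.rel x y → R.rel x y) ↔
          R.Saturated) ∧
    (∀ R Rsat : TransferSystem P,
        Rsat.Saturated → (∀ x y, R.rel x y → Rsat.rel x y) →
        (∀ S : TransferSystem P, S.Saturated → (∀ x y, R.rel x y → S.rel x y) →
            ∀ x y, Rsat.rel x y → S.rel x y) →
        chi Rsat = chi R ∧
          ∀ T : TransferSystem P, chi T = chi R → ∀ x y, T.rel x y → Rsat.rel x y) := by
  -- chi of sat R equals chi R
  have chi_sat : ∀ R : TransferSystem P, chi (sat R (chi R) (hchi R)) = chi R := by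
    intro R
    funext x
    exact (hchi (sat R (chi R) (hchi R)) x).unique (sat_isLeast R (chi R) (hchi R) x)
  -- members of the fiber refine sat R
  have fiber_le_sat : ∀ R T : TransferSystem P, chi T = chi R →
      ∀ x y, T.rel x y → (sat R (chi R) (hchi R)).rel x y := by
    intro R T hT x y hxy
    refine ⟨T.le_of_rel _ _ hxy, ?_⟩
    have := chi_eq_of_rel (hchi T) hxy
    rwa [hT] at this
  -- Part 2
  have part2 : ∀ R : TransferSystem P,
      (∀ T : TransferSystem P, chi T = chi R → ∀ x y, T.rel x y → R.rel x y) ↔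
        R.Saturated := by
    intro R
    constructor
    · intro hgr x y z hxy hyz hxz
      refine hgr (sat R (chi R) (hchi R)) (chi_sat R) y z
        ⟨hyz, ?_⟩
      rw [← chi_eq_of_rel (hchi R) hxy, chi_eq_of_rel (hchi R) hxz]
    · intro hsat T hT x y hxy
      have h1 := T.le_of_rel _ _ hxy
      have h2 := chi_eq_of_rel (hchi T) hxy
      rw [hT] at h2
      exact rel_of_saturated (hchi R) hsat h1 h2
  refine ⟨?_, part2, ?_⟩
  · intro R
    exact ⟨sat R (chi R) (hchi R), chi_sat R, fiber_le_sat R⟩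
  · intro R Rsat hsat hsub hleast
    have hchiEq : chi Rsat = chi R := by
      funext x
      refine (hchi Rsat x).unique ⟨hsub _ _ (chi_rel (hchi R) x), ?_⟩
      intro y hy
      have hS := hleast (sat R (chi R) (hchi R)) (sat_saturated R (chi R) (hchi R))
        (fun a b hab => le_sat R (chi R) (hchi R) hab) y x hy
      rw [← hS.2]
      exact R.le_of_rel _ _ (chi_rel (hchi R) y)
    refine ⟨hchiEq, fun T hT => ?_⟩
    exact (part2 Rsat).mpr hsat T (hT.trans hchiEq.symm)
end

section
/- Let P be a finite lattice and let R, R' be transfer systems on P with χ^R = χ^{R'}. Then χ^{R ∧ R'} = χ^R = χ^{R'}, where R ∧ R' is the meet of R and R' in Tr(P), given by intersection of relations: x (R ∧ R') y iff x R y and x R' y. -/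
/-- if transfer systems R, R' on a finite lattice have the same
characteristic function, then so does their meet R ∧ R' in Tr(P), which is
given by intersection of relations. -/
theorem stmt7 {P : Type*} [Lattice P] [Finite P] (R R' T : TransferSystem P)
    (hT : ∀ x y, T.rel x y ↔ R.rel x y ∧ R'.rel x y)
    (χR χR' χT : P → P)
    (hχR : ∀ x, IsLeast {y : P | R.rel y x} (χR x))
    (hχR' : ∀ x, IsLeast {y : P | R'.rel y x} (χR' x))
    (hχT : ∀ x, IsLeast {y : P | T.rel y x} (χT x))
    (heq : χR = χR') :
    χT = χR ∧ χT = χR' := by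
  have key : χT = χR := by
    funext x
    have hmem : T.rel (χR x) x := by
      rw [hT]
      refine ⟨(hχR x).1, ?_⟩
      have : χR x = χR' x := congrFun heq x
      rw [this]; exact (hχR' x).1
    have h1 : χT x ≤ χR x := (hχT x).2 hmem
    have h2 : χR x ≤ χT x := (hχR x).2 (((hT _ _).1 (hχT x).1).1)
    exact le_antisymm h1 h2
  exact ⟨key, key.trans heq⟩
end

section
/- Let P be a finite lattice and R a transfer system on P. The fiber {R' ∈ Tr(P) | χ^{R'} = χ^R} has a least element in the refinement order, namely the transfer system ⟨{(x, y) | χ^R(y) = x or x = y}⟩ generated by the pairs (χ^R(y), y) together with all diagonal pairs. -/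
/-- the fiber of the characteristic map containing R has a least
element, namely the transfer system generated by the pairs (χ^R(y), y)
together with all diagonal pairs. -/
theorem stmt8 {P : Type*} [Lattice P] [Finite P] (R : TransferSystem P) (χ : P → P)
    (hχ : ∀ x, IsLeast {y : P | R.rel y x} (χ x))
    (Rt : TransferSystem P)
    (hgen : ∀ x y : P, (χ y = x ∨ x = y) → Rt.rel x y)
    (hgenleast : ∀ S : TransferSystem P, (∀ x y : P, (χ y = x ∨ x = y) → S.rel x y) →
        ∀ x y, Rt.rel x y → S.rel x y) :
    (∀ x, IsLeast {y : P | Rt.rel y x} (χ x)) ∧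
    (∀ T : TransferSystem P, (∀ x, IsLeast {y : P | T.rel y x} (χ x)) →
        ∀ x y, Rt.rel x y → T.rel x y) := by
  have hRgen : ∀ x y : P, (χ y = x ∨ x = y) → R.rel x y := by
    rintro x y (rfl | rfl)
    · exact (hχ y).1
    · exact R.refl x
  constructor
  · intro x
    constructor
    · exact hgen _ x (Or.inl rfl)
    · intro y hy
      exact (hχ x).2 (hgenleast R hRgen y x hy)
  · intro T hT x y h
    refine hgenleast T ?_ x y h
    rintro a b (rfl | rfl)
    · exact (hT b).1
    · exact T.refl a
end

section
/- For integers m, n ≥ 1, the number of transfer systems on the fusion [m] * [n] of the total orders [m] = {0 < 1 < ⋯ < m} and [n] = {0 < 1 < ⋯ < n} is |Tr([m]*[n])| = 2·Cat(n)·Cat(m) + Cat(n−1)·(Cat(m+1) − 2·Cat(m)) + Cat(m−1)·(Cat(n+1) − 2·Cat(n)), where Cat(k) = (1/(k+1))·binom(2k, k) is the k-th Catalan number. In particular, |Tr([n]*[n])| = 2·(Cat(n)² + Cat(n−1)·(Cat(n+1) − 2·Cat(n))). -/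
/-- A transfer system on a poset that need not have binary meets: a partial
order refining `≤` such that `x R y` and `z ≤ y` imply `w R z` for every
maximal common lower bound `w` of `x` and `z`. This agrees with the lattice
definition when meets exist. -/
structure TransferSystemPoset (P : Type*) [PartialOrder P] where
  rel : P → P → Prop
  refl : ∀ x, rel x x
  trans : ∀ x y z, rel x y → rel y z → rel x z
  le_of_rel : ∀ x y, rel x y → x ≤ y
  restrict : ∀ x y z w, rel x y → z ≤ y → w ≤ x → w ≤ z →
    (∀ v, v ≤ x → v ≤ z → w ≤ v → v = w) → rel w z


structure ChainTS (k : ℕ) where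
  rel : Fin k → Fin k → Prop
  refl : ∀ x, rel x x
  trans : ∀ x y z, rel x y → rel y z → rel x z
  le_of_rel : ∀ x y, rel x y → x ≤ y
  restrict : ∀ x y z, rel x y → z ≤ y → rel (min x z) z

namespace ChainTS

lemma valmin {k : ℕ} (x z : Fin k) : (min x z).val = min x.val z.val := rfl

/-- glue triple into a chain transfer system -/
def glue {k : ℕ} (j : Fin (k+1)) (L : ChainTS j.val) (Rt : ChainTS (k - j.val)) :
    ChainTS (k+1) where
  rel x y := (∃ (hx : x.val < j.val) (hy : y.val < j.val), L.rel ⟨x.val, hx⟩ ⟨y.val, hy⟩)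
    ∨ (x = j ∧ j ≤ y)
    ∨ (∃ (hx : j.val < x.val) (hy : j.val < y.val),
        Rt.rel ⟨x.val - j.val - 1, by omega⟩ ⟨y.val - j.val - 1, by omega⟩)
  refl x := by
    rcases lt_trichotomy x.val j.val with h | h | h
    · exact Or.inl ⟨h, h, L.refl _⟩
    · exact Or.inr (Or.inl ⟨Fin.ext h, (Fin.ext h).ge⟩)
    · exact Or.inr (Or.inr ⟨h, h, Rt.refl _⟩)
  trans x y z h1 h2 := by
    rcases h1 with ⟨hx, hy, h1⟩ | ⟨hx, hy⟩ | ⟨hx, hy, h1⟩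
    · rcases h2 with ⟨hy', hz, h2⟩ | ⟨hy', hz⟩ | ⟨hy', hz, h2⟩
      · exact Or.inl ⟨hx, hz, L.trans _ _ _ h1 (by convert h2 using 2)⟩
      · exact absurd (congrArg Fin.val hy') (by omega)
      · omega
    · rcases h2 with ⟨hy', hz, h2⟩ | ⟨hy', hz⟩ | ⟨hy', hz, h2⟩
      · have := Fin.le_def.mp hy; omega
      · exact Or.inr (Or.inl ⟨hx, hz⟩)
      · refine Or.inr (Or.inl ⟨hx, ?_⟩)
        have h3 := Fin.le_def.mp (Rt.le_of_rel _ _ h2)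
        simp only at h3
        exact Fin.le_def.mpr (by omega)
    · rcases h2 with ⟨hy', hz, h2⟩ | ⟨hy', hz⟩ | ⟨hy', hz, h2⟩
      · omega
      · exact absurd (congrArg Fin.val hy') (by omega)
      · exact Or.inr (Or.inr ⟨hx, hz, Rt.trans _ _ _ h1 (by convert h2 using 2)⟩)
  le_of_rel x y h := by
    rcases h with ⟨hx, hy, h⟩ | ⟨hx, hy⟩ | ⟨hx, hy, h⟩
    · have := Fin.le_def.mp (L.le_of_rel _ _ h); exact Fin.le_def.mpr (by simpa using this)
    · exact hx ▸ hy
    · have h3 := Fin.le_def.mp (Rt.le_of_rel _ _ h); simp only at h3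
      exact Fin.le_def.mpr (by omega)
  restrict x y z h1 h2 := by
    have hzy := Fin.le_def.mp h2
    rcases h1 with ⟨hx, hy, h1⟩ | ⟨hx, hy⟩ | ⟨hx, hy, h1⟩
    · have hz : z.val < j.val := by omega
      have h5 := L.restrict _ _ ⟨z.val, hz⟩ h1 (Fin.le_def.mpr hzy)
      refine Or.inl ⟨by simp only [valmin]; omega, hz, ?_⟩
      convert h5 using 2
      all_goals rfl
    · rcases le_or_gt j z with h | h
      · refine Or.inr (Or.inl ⟨?_, h⟩)
        have := Fin.le_def.mp h
        exact Fin.ext (by simp only [valmin]; subst hx; omega)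
      · have hmz : min x z = z := by
          apply Fin.ext; have := Fin.lt_def.mp h; subst hx
          simp only [valmin]; omega
        rw [hmz]
        rcases lt_trichotomy z.val j.val with h' | h' | h'
        · exact Or.inl ⟨h', h', L.refl _⟩
        · exact Or.inr (Or.inl ⟨Fin.ext h', (Fin.ext h').ge⟩)
        · exact Or.inr (Or.inr ⟨h', h', Rt.refl _⟩)
    · rcases le_or_gt z.val j.val with h | h
      · have hmz : min x z = z := Fin.ext (by simp only [valmin]; omega)
        rw [hmz]
        rcases lt_trichotomy z.val j.val with h' | h' | h'
        · exact Or.inl ⟨h', h', L.refl _⟩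
        · exact Or.inr (Or.inl ⟨Fin.ext h', (Fin.ext h').ge⟩)
        · omega
      · have h5 := Rt.restrict _ _ ⟨z.val - j.val - 1, by omega⟩ h1
          (Fin.le_def.mpr (show z.val - j.val - 1 ≤ y.val - j.val - 1 by omega))
        refine Or.inr (Or.inr ⟨by simp only [valmin]; omega, h, ?_⟩)
        convert h5 using 2
        simp only [valmin]
        omega



lemma ext' {k : ℕ} {R S : ChainTS k} (h : R.rel = S.rel) : R = S := by
  cases R; cases S; cases h; rfl

lemma ext'' {k : ℕ} {R S : ChainTS k} (h : ∀ x y, R.rel x y ↔ S.rel x y) : R = S :=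
  ext' (funext fun x => funext fun y => propext (h x y))

instance finite (k : ℕ) : Finite (ChainTS k) := by
  have : Function.Injective (fun R : ChainTS k => R.rel) := fun R S h => ext' h
  exact Finite.of_injective _ this

/-- pull back a chain transfer system along a strictly monotone map -/
def pullback {k K : ℕ} (f : Fin k → Fin K) (hf : StrictMono f) (R : ChainTS K) :
    ChainTS k where
  rel a b := R.rel (f a) (f b)
  refl a := R.refl _
  trans a b c h1 h2 := R.trans _ _ _ h1 h2
  le_of_rel a b h := hf.le_iff_le.mp (R.le_of_rel _ _ h)
  restrict a b c h1 h2 := by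
    have := R.restrict _ _ _ h1 (hf.monotone h2)
    rwa [← hf.monotone.map_min] at this

lemma glue_rel_top {k : ℕ} (j : Fin (k+1)) (L : ChainTS j.val) (Rt : ChainTS (k - j.val)) :
    (glue j L Rt).rel j (Fin.last k) :=
  Or.inr (Or.inl ⟨rfl, Fin.le_last j⟩)

lemma glue_not_rel_top {k : ℕ} (j : Fin (k+1)) (L : ChainTS j.val)
    (Rt : ChainTS (k - j.val)) (x : Fin (k+1)) (hx : x.val < j.val) :
    ¬ (glue j L Rt).rel x (Fin.last k) := by
  rintro (⟨h1, h2, -⟩ | ⟨h1, h2⟩ | ⟨h1, h2, -⟩)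
  · simp [Fin.last] at h2; omega
  · subst h1; omega
  · omega

lemma glue_injective {k : ℕ} :
    Function.Injective
      (fun t : Σ j : Fin (k+1), ChainTS j.val × ChainTS (k - j.val) =>
        glue t.1 t.2.1 t.2.2) := by
  rintro ⟨j, L, Rt⟩ ⟨j', L', Rt'⟩ h
  simp only at h
  have hj : j = j' := by
    by_contra hne
    rcases Fin.lt_or_lt_of_ne hne with hlt | hlt
    · exact glue_not_rel_top j' L' Rt' j hlt (h ▸ glue_rel_top j L Rt)
    · exact glue_not_rel_top j L Rt j' hlt (h.symm ▸ glue_rel_top j' L' Rt')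
  subst hj
  have hrel : ∀ x y, (glue j L Rt).rel x y ↔ (glue j L' Rt').rel x y := by
    intro x y; rw [h]
  have hL : L = L' := by
    apply ext''; intro a b
    have hia := a.isLt; have hib := b.isLt
    have := hrel ⟨a.val, by omega⟩ ⟨b.val, by omega⟩
    simp only [glue] at this
    constructor
    · intro hab
      rcases this.mp (Or.inl ⟨a.isLt, b.isLt, by simpa using hab⟩) with
        ⟨h1, h2, h3⟩ | ⟨h1, h2⟩ | ⟨h1, h2, h3⟩
      · simpa using h3
      · have h1' : a.val = j.val := congrArg Fin.val h1; omega
      · have h1' : j.val < a.val := h1; omega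
    · intro hab
      rcases this.mpr (Or.inl ⟨a.isLt, b.isLt, by simpa using hab⟩) with
        ⟨h1, h2, h3⟩ | ⟨h1, h2⟩ | ⟨h1, h2, h3⟩
      · simpa using h3
      · have h1' : a.val = j.val := congrArg Fin.val h1; omega
      · have h1' : j.val < a.val := h1; omega
  have hRt : Rt = Rt' := by
    apply ext''; intro a b
    have hab' : a.val < k - j.val := a.isLt
    have hbb' : b.val < k - j.val := b.isLt
    have := hrel ⟨j.val + 1 + a.val, by omega⟩ ⟨j.val + 1 + b.val, by omega⟩
    simp only [glue] at this
    have key : ∀ (X : ChainTS (k - j.val)), X.rel a b ↔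
        X.rel ⟨j.val + 1 + a.val - j.val - 1, by omega⟩
          ⟨j.val + 1 + b.val - j.val - 1, by omega⟩ := by
      intro X
      constructor <;> intro hx <;> (convert hx using 2 <;> omega)
    have e1 : j.val < (⟨j.val + 1 + a.val, by omega⟩ : Fin (k+1)).val := by
      show j.val < j.val + 1 + a.val; omega
    have e2 : j.val < (⟨j.val + 1 + b.val, by omega⟩ : Fin (k+1)).val := by
      show j.val < j.val + 1 + b.val; omega
    constructor
    · intro hab
      rcases this.mp (Or.inr (Or.inr ⟨e1, e2, (key Rt).mp hab⟩)) with
        ⟨h1, h2, h3⟩ | ⟨h1, h2⟩ | ⟨h1, h2, h3⟩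
      · have h1' : j.val + 1 + a.val < j.val := h1; omega
      · have h1' : j.val + 1 + a.val = j.val := congrArg Fin.val h1; omega
      · exact (key Rt').mpr (by convert h3 using 2 <;> omega)
    · intro hab
      rcases this.mpr (Or.inr (Or.inr ⟨e1, e2, (key Rt').mp hab⟩)) with
        ⟨h1, h2, h3⟩ | ⟨h1, h2⟩ | ⟨h1, h2, h3⟩
      · have h1' : j.val + 1 + a.val < j.val := h1; omega
      · have h1' : j.val + 1 + a.val = j.val := congrArg Fin.val h1; omega
      · exact (key Rt).mpr (by convert h3 using 2 <;> omega)
  exact congrArg (Sigma.mk j) (by rw [hL, hRt])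


set_option maxHeartbeats 1000000 in
open Classical in
lemma glue_surjective {k : ℕ} :
    Function.Surjective
      (fun t : Σ j : Fin (k+1), ChainTS j.val × ChainTS (k - j.val) =>
        glue t.1 t.2.1 t.2.2) := by
  intro R
  have hex : ∃ v : ℕ, ∃ h : v < k + 1, R.rel ⟨v, h⟩ (Fin.last k) :=
    ⟨k, by omega, R.refl _⟩
  obtain ⟨jv, ⟨hlt, hrel⟩, hminv⟩ :
      ∃ v : ℕ, (∃ h : v < k + 1, R.rel ⟨v, h⟩ (Fin.last k)) ∧
        ∀ w : ℕ, (∃ h : w < k + 1, R.rel ⟨w, h⟩ (Fin.last k)) → v ≤ w :=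
    ⟨Nat.find hex, Nat.find_spec hex, fun w hw => Nat.find_min' hex hw⟩
  have hmin : ∀ x : Fin (k+1), R.rel x (Fin.last k) → jv ≤ x.val := fun x hx =>
    hminv x.val ⟨x.isLt, hx⟩
  let j : Fin (k+1) := ⟨jv, hlt⟩
  have hj : R.rel j (Fin.last k) := hrel
  have hjy : ∀ y : Fin (k+1), jv ≤ y.val → R.rel j y := by
    intro y hy
    have h1 := R.restrict j (Fin.last k) y hj (Fin.le_last y)
    have : min j y = j := Fin.ext (by simp only [valmin]; show min jv y.val = jv; omega)
    rwa [this] at h1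
  refine ⟨⟨j, pullback (fun a : Fin jv => (⟨a.val, by omega⟩ : Fin (k+1)))
      (fun a b hab => hab) R,
    pullback (fun a : Fin (k - jv) => (⟨jv + 1 + a.val, by omega⟩ : Fin (k+1)))
      (fun a b hab => Nat.add_lt_add_left hab (jv + 1)) R⟩, ?_⟩
  apply ext''
  intro x y
  simp only [glue, pullback]
  constructor
  · rintro (⟨hx, hy, h3⟩ | ⟨hx, hy⟩ | ⟨hx, hy, h3⟩)
    · exact h3
    · subst hx; exact hjy y hy
    · change jv < x.val at hx; change jv < y.val at hy
      have ex1 : (⟨jv + 1 + (x.val - jv - 1), by omega⟩ : Fin (k+1)) = x := by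
        apply Fin.ext; show jv + 1 + (x.val - jv - 1) = x.val; omega
      have ex2 : (⟨jv + 1 + (y.val - jv - 1), by omega⟩ : Fin (k+1)) = y := by
        apply Fin.ext; show jv + 1 + (y.val - jv - 1) = y.val; omega
      rw [← ex1, ← ex2]
      exact h3
  · intro hxy
    have hle := Fin.le_def.mp (R.le_of_rel _ _ hxy)
    rcases lt_trichotomy x.val jv with hx | hx | hx
    · rcases lt_or_ge y.val jv with hy | hy
      · exact Or.inl ⟨hx, hy, hxy⟩
      · exfalso
        have h1 := R.restrict x y j hxy (Fin.le_def.mpr (by show jv ≤ y.val; omega))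
        have hmx : min x j = x := Fin.ext (by simp only [valmin]; show min x.val jv = x.val; omega)
        rw [hmx] at h1
        have := hmin x (R.trans _ _ _ h1 hj)
        omega
    · exact Or.inr (Or.inl ⟨Fin.ext hx, Fin.le_def.mpr (show jv ≤ y.val by omega)⟩)
    · refine Or.inr (Or.inr ⟨hx, by show jv < y.val; omega, ?_⟩)
      have ex1 : (⟨jv + 1 + (x.val - jv - 1), by omega⟩ : Fin (k+1)) = x := by
        apply Fin.ext; show jv + 1 + (x.val - jv - 1) = x.val; omega
      have ex2 : (⟨jv + 1 + (y.val - jv - 1), by omega⟩ : Fin (k+1)) = y := by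
        apply Fin.ext; show jv + 1 + (y.val - jv - 1) = y.val; omega
      show R.rel _ _
      rw [ex1, ex2]
      exact hxy

/-- the recursive decomposition of chain transfer systems -/
noncomputable def sigmaEquiv (k : ℕ) :
    (Σ j : Fin (k+1), ChainTS j.val × ChainTS (k - j.val)) ≃ ChainTS (k+1) :=
  Equiv.ofBijective _ ⟨glue_injective, glue_surjective⟩

lemma card_sigma' {ι : Type} [Fintype ι] (f : ι → Type) [∀ i, Finite (f i)] :
    Nat.card (Σ i, f i) = ∑ i, Nat.card (f i) := by
  have : ∀ i, Fintype (f i) := fun i => Fintype.ofFinite _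
  simp [Nat.card_eq_fintype_card, Fintype.card_sigma]

lemma card_eq_catalan : ∀ k, Nat.card (ChainTS k) = catalan k := by
  intro k
  induction k using Nat.strong_induction_on with
  | _ k ih =>
    cases k with
    | zero =>
      have h1 : Subsingleton (ChainTS 0) := ⟨fun a b => ext'' (fun x _ => x.elim0)⟩
      have h2 : Nonempty (ChainTS 0) :=
        ⟨⟨fun _ _ => True, fun x => x.elim0, fun x => x.elim0,
          fun x => x.elim0, fun x => x.elim0⟩⟩
      rw [catalan_zero]
      exact Nat.card_eq_one_iff_unique.mpr ⟨h1, h2⟩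
    | succ k =>
      rw [← Nat.card_congr (sigmaEquiv k), card_sigma', catalan_succ]
      refine Finset.sum_congr rfl fun j _ => ?_
      rw [Nat.card_prod, ih j.val (by omega), ih (k - j.val) (by omega)]

/-- the trivial chain transfer system with rel = ≤ is nonempty evidence;
here we only need the one with smallest rel: rel = eq is also fine, but
`≤`-restriction needs min: use full order -/
def chainAll (k : ℕ) : ChainTS k where
  rel x y := x ≤ y
  refl x := le_refl x
  trans x y z h1 h2 := le_trans h1 h2
  le_of_rel _ _ h := h
  restrict x y z _ _ := min_le_right x z

instance : Subsingleton (ChainTS 0) := ⟨fun a b => ext'' (fun x _ => x.elim0)⟩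

lemma glue_rel_lt {k : ℕ} {j : Fin (k+1)} {L : ChainTS j.val} {Rt : ChainTS (k - j.val)}
    {x y : Fin (k+1)} (hx : x.val < j.val) (hy : y.val < j.val) :
    (glue j L Rt).rel x y ↔ L.rel ⟨x.val, hx⟩ ⟨y.val, hy⟩ := by
  constructor
  · rintro (⟨h1, h2, h3⟩ | ⟨h1, h2⟩ | ⟨h1, h2, h3⟩)
    · exact h3
    · have : x.val = j.val := congrArg Fin.val h1; omega
    · omega
  · intro h; exact Or.inl ⟨hx, hy, h⟩

lemma glue_rel_gt {k : ℕ} {j : Fin (k+1)} {L : ChainTS j.val} {Rt : ChainTS (k - j.val)}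
    {x y : Fin (k+1)} (hx : j.val < x.val) (hy : j.val < y.val) :
    (glue j L Rt).rel x y ↔
      Rt.rel ⟨x.val - j.val - 1, by omega⟩ ⟨y.val - j.val - 1, by omega⟩ := by
  constructor
  · rintro (⟨h1, h2, h3⟩ | ⟨h1, h2⟩ | ⟨h1, h2, h3⟩)
    · omega
    · have : x.val = j.val := congrArg Fin.val h1; omega
    · exact h3
  · intro h; exact Or.inr (Or.inr ⟨hx, hy, h⟩)

lemma glue_rel_self {k : ℕ} {j : Fin (k+1)} {L : ChainTS j.val} {Rt : ChainTS (k - j.val)}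
    {y : Fin (k+1)} (hy : j ≤ y) :
    (glue j L Rt).rel j y := Or.inr (Or.inl ⟨rfl, hy⟩)

/-- extract components from an equality of glued systems with the same `j` -/
lemma glue_inj_comp {k : ℕ} {j : Fin (k+1)} {L L' : ChainTS j.val}
    {Rt Rt' : ChainTS (k - j.val)} (h : glue j L Rt = glue j L' Rt') :
    L = L' ∧ Rt = Rt' := by
  have h2 := glue_injective (k := k)
    (a₁ := ⟨j, L, Rt⟩) (a₂ := ⟨j, L', Rt'⟩) h
  injection h2 with e1 e2
  exact ⟨congrArg Prod.fst e2, congrArg Prod.snd e2⟩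

/-- decompose an arbitrary chain transfer system -/
lemma glue_decomp {k : ℕ} (A : ChainTS (k+1)) :
    ∃ (j : Fin (k+1)) (L : ChainTS j.val) (Rt : ChainTS (k - j.val)),
      glue j L Rt = A := by
  obtain ⟨⟨j, L, Rt⟩, h⟩ := glue_surjective A
  exact ⟨j, L, Rt, h⟩

/-- a full chain transfer system decomposes with j = 0 -/
lemma full_decomp {k : ℕ} (A : ChainTS (k+1)) (hA : A.rel 0 (Fin.last k)) :
    ∃ C : ChainTS k, glue 0 (chainAll 0) C = A := by
  obtain ⟨j, L, Rt, h⟩ := glue_decomp A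
  have hj : j = 0 := by
    by_contra hne
    have hlt : (0 : Fin (k+1)).val < j.val := by
      have := Fin.pos_of_ne_zero hne; simpa using this
    exact glue_not_rel_top j L Rt 0 hlt (h ▸ hA)
  subst hj
  haveI : Subsingleton (ChainTS ((0 : Fin (k+1)).val)) := by
    rw [Fin.val_zero]; infer_instance
  exact ⟨Rt, by rw [← h]; congr 1; exact Subsingleton.elim _ _⟩

instance subsingleton_sub_self (k : ℕ) : Subsingleton (ChainTS (k - k)) := by
  rw [Nat.sub_self]; infer_instance

/-- an isolated-top chain transfer system decomposes with j = last -/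
lemma isolated_decomp {k : ℕ} (A : ChainTS (k+1))
    (hA : ∀ x : Fin (k+1), x.val < k → ¬ A.rel x (Fin.last k)) :
    ∃ C : ChainTS k, glue (Fin.last k) C (chainAll (k - k)) = A := by
  obtain ⟨j, L, Rt, h⟩ := glue_decomp A
  have hj : j = Fin.last k := by
    by_contra hne
    have hlt : j.val < k := by
      have := j.isLt
      have : j.val ≠ k := fun hh => hne (Fin.ext hh)
      omega
    exact hA j hlt (h ▸ glue_rel_top j L Rt)
  subst hj
  haveI : Subsingleton (ChainTS (k - (Fin.last k).val)) := by
    rw [Fin.val_last, Nat.sub_self]; infer_instance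
  exact ⟨L, by rw [← h]; congr 1; exact Subsingleton.elim _ _⟩

/-- full systems on [k] correspond to systems on the chain with k elements -/
noncomputable def fullIso (k : ℕ) :
    ChainTS k ≃ {A : ChainTS (k+1) // A.rel 0 (Fin.last k)} := by
  refine Equiv.ofBijective
    (fun C => ⟨glue 0 (chainAll 0) C, glue_rel_self (Fin.zero_le _)⟩) ⟨?_, ?_⟩
  · intro C C' h
    exact (glue_inj_comp (congrArg Subtype.val h)).2
  · rintro ⟨A, hA⟩
    obtain ⟨C, hC⟩ := full_decomp A hA
    exact ⟨C, Subtype.ext hC⟩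

/-- isolated-top systems on [k] correspond to systems on the chain with k elements -/
noncomputable def isolatedIso (k : ℕ) :
    ChainTS k ≃ {A : ChainTS (k+1) // ∀ x : Fin (k+1), x.val < k → ¬ A.rel x (Fin.last k)} := by
  refine Equiv.ofBijective
    (fun C => ⟨glue (Fin.last k) C (chainAll (k - k)),
      fun x hx => glue_not_rel_top _ _ _ x hx⟩) ⟨?_, ?_⟩
  · intro C C' h
    exact (glue_inj_comp (congrArg Subtype.val h)).1
  · rintro ⟨A, hA⟩
    obtain ⟨C, hC⟩ := isolated_decomp A hA
    exact ⟨C, Subtype.ext hC⟩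

lemma card_full (k : ℕ) :
    Nat.card {A : ChainTS (k+1) // A.rel 0 (Fin.last k)} = catalan k := by
  rw [← Nat.card_congr (fullIso k), card_eq_catalan]

lemma card_isolated (k : ℕ) :
    Nat.card {A : ChainTS (k+1) // ∀ x : Fin (k+1), x.val < k → ¬ A.rel x (Fin.last k)}
      = catalan k := by
  rw [← Nat.card_congr (isolatedIso k), card_eq_catalan]

/-- B has isolated top and an interior bottom fan: equivalent to systems on
the chain of k elements -/
noncomputable def sideIso (k : ℕ) :
    ChainTS k ≃ {B : ChainTS (k+2) //
      (∀ x : Fin (k+2), x.val < k+1 → ¬ B.rel x (Fin.last (k+1))) ∧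
      (∀ j : Fin (k+2), j.val < k+1 → B.rel 0 j)} := by
  have hzv : ((0 : Fin (k+2)).val) = ((0 : Fin (k+1)) : ℕ) := by simp
  refine Equiv.ofBijective (fun C =>
    ⟨glue (Fin.last (k+1)) (glue 0 (chainAll 0) C) (chainAll ((k+1) - (k+1))),
      fun x hx => glue_not_rel_top _ _ _ x hx, fun j hj => ?_⟩) ⟨?_, ?_⟩
  · have h0 : ((0 : Fin (k+2)).val) < (Fin.last (k+1)).val := by simp
    refine (glue_rel_lt h0 (by simpa using hj)).mpr ?_
    have he : (⟨(0 : Fin (k+2)).val, h0⟩ : Fin (k+1)) = 0 := Fin.ext (by simp)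
    rw [he]
    exact glue_rel_self (Fin.zero_le _)
  · intro C C' h
    have h1 := (glue_inj_comp (congrArg Subtype.val h)).1
    exact (glue_inj_comp h1).2
  · rintro ⟨B, hNS, hIBF⟩
    obtain ⟨A, hA⟩ := isolated_decomp B hNS
    have hAfull : A.rel 0 (Fin.last k) := by
      have h0 : ((0 : Fin (k+2)).val) < (Fin.last (k+1)).val := by simp
      have hk : ((⟨k, by omega⟩ : Fin (k+2)).val) < (Fin.last (k+1)).val := by simp
      have := (glue_rel_lt (L := A) (Rt := chainAll ((k+1) - (k+1))) h0 hk).mp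
        (by rw [hA]; exact hIBF ⟨k, by omega⟩ (by simp))
      have e1 : (⟨(0 : Fin (k+2)).val, h0⟩ : Fin (k+1)) = 0 := Fin.ext (by simp)
      have e2 : (⟨(⟨k, by omega⟩ : Fin (k+2)).val, hk⟩ : Fin (k+1)) = Fin.last k :=
        Fin.ext (by simp)
      rwa [e1, e2] at this
    obtain ⟨C, hC⟩ := full_decomp A hAfull
    refine ⟨C, Subtype.ext ?_⟩
    show glue _ _ _ = B
    rw [← hA]
    congr 1

lemma card_side (k : ℕ) :
    Nat.card {B : ChainTS (k+2) //
      (∀ x : Fin (k+2), x.val < k+1 → ¬ B.rel x (Fin.last (k+1))) ∧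
      (∀ j : Fin (k+2), j.val < k+1 → B.rel 0 j)} = catalan k := by
  rw [← Nat.card_congr (sideIso k), card_eq_catalan]

lemma card_split_total {α : Type*} [Finite α] (q : α → Prop) :
    Nat.card α = Nat.card {x : α // q x} + Nat.card {x : α // ¬ q x} := by
  classical
  rw [← Nat.card_sum]
  exact (Nat.card_congr (Equiv.sumCompl q)).symm

lemma card_split {α : Type*} [Finite α] (p q : α → Prop) :
    Nat.card {x : α // p x} =
      Nat.card {x : α // p x ∧ q x} + Nat.card {x : α // p x ∧ ¬ q x} := by
  classical
  have e : {x : α // p x} ≃ {x : α // p x ∧ q x} ⊕ {x : α // p x ∧ ¬ q x} :=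
    ((Equiv.sumCompl (fun y : {x // p x} => q y.val)).symm).trans
      (Equiv.sumCongr (Equiv.subtypeSubtypeEquivSubtypeInter p q)
        (Equiv.subtypeSubtypeEquivSubtypeInter p (fun a => ¬ q a)))
  rw [Nat.card_congr e, Nat.card_sum]

lemma card_SnF (k : ℕ) (hk : 1 ≤ k) :
    catalan (k+1) = Nat.card {A : ChainTS (k+1) //
      (∃ x : Fin (k+1), x.val < k ∧ A.rel x (Fin.last k)) ∧ ¬ A.rel 0 (Fin.last k)}
      + 2 * catalan k := by
  classical
  have h0 : Nat.card (ChainTS (k+1)) = catalan (k+1) := card_eq_catalan _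
  have h1 := card_split_total
    (fun A : ChainTS (k+1) => ∃ x : Fin (k+1), x.val < k ∧ A.rel x (Fin.last k))
  have h2 := card_split
    (fun A : ChainTS (k+1) => ∃ x : Fin (k+1), x.val < k ∧ A.rel x (Fin.last k))
    (fun A : ChainTS (k+1) => A.rel 0 (Fin.last k))
  have h3 : Nat.card {A : ChainTS (k+1) //
      (∃ x : Fin (k+1), x.val < k ∧ A.rel x (Fin.last k)) ∧ A.rel 0 (Fin.last k)}
      = catalan k := by
    rw [← card_full k]
    apply Nat.card_congr
    apply Equiv.subtypeEquivRight
    intro A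
    constructor
    · exact fun h => h.2
    · exact fun h => ⟨⟨0, by simp; omega, h⟩, h⟩
  have h4 : Nat.card {A : ChainTS (k+1) //
      ¬ ∃ x : Fin (k+1), x.val < k ∧ A.rel x (Fin.last k)} = catalan k := by
    rw [← card_isolated k]
    apply Nat.card_congr
    apply Equiv.subtypeEquivRight
    intro A
    push_neg
    rfl
  omega

lemma bot_fan {k : ℕ} (A : ChainTS (k+1)) (hA : A.rel 0 (Fin.last k)) (j : Fin (k+1)) :
    A.rel 0 j := by
  have h1 := A.restrict 0 (Fin.last k) j hA (Fin.le_last j)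
  have : min (0 : Fin (k+1)) j = 0 := Fin.ext (by simp [valmin])
  rwa [this] at h1

lemma stop_ibf_full {k : ℕ} (A : ChainTS (k+1)) (hk : 1 ≤ k)
    (hS : ∃ x : Fin (k+1), x.val < k ∧ A.rel x (Fin.last k))
    (hI : ∀ j : Fin (k+1), j.val < k → A.rel 0 j) :
    A.rel 0 (Fin.last k) := by
  obtain ⟨x, hx, hrel⟩ := hS
  rcases Nat.eq_zero_or_pos x.val with h0 | h0
  · have : x = 0 := Fin.ext (by simpa using h0)
    rwa [← this]
  · exact A.trans _ _ _ (hI x hx) hrel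

def prodSubtypeEquiv {α β : Type*} (pa : α → Prop) (pb : β → Prop) :
    {p : α × β // pa p.1 ∧ pb p.2} ≃ {a // pa a} × {b // pb b} where
  toFun p := (⟨p.val.1, p.prop.1⟩, ⟨p.val.2, p.prop.2⟩)
  invFun q := ⟨(q.1.val, q.2.val), q.1.prop, q.2.prop⟩
  left_inv p := rfl
  right_inv q := rfl

/-- a compatible pair of chain transfer systems: the abstract combinatorial
data of a transfer system on the fusion -/
def Compat {m n : ℕ} (p : ChainTS (m+1) × ChainTS (n+1)) : Prop :=
  (p.1.rel 0 (Fin.last m) ↔ p.2.rel 0 (Fin.last n)) ∧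
  ((∃ x : Fin (m+1), x.val < m ∧ p.1.rel x (Fin.last m)) →
    ∀ j : Fin (n+1), j.val < n → p.2.rel 0 j) ∧
  ((∃ y : Fin (n+1), y.val < n ∧ p.2.rel y (Fin.last n)) →
    ∀ i : Fin (m+1), i.val < m → p.1.rel 0 i)

lemma card_compat (m n : ℕ) (hm : 1 ≤ m) (hn : 1 ≤ n) :
    Nat.card {p : ChainTS (m+1) × ChainTS (n+1) // Compat p} =
      2 * catalan n * catalan m
        + catalan (n-1) * (catalan (m+1) - 2 * catalan m)
        + catalan (m-1) * (catalan (n+1) - 2 * catalan n) := by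
  classical
  obtain ⟨a, rfl⟩ : ∃ a, m = a + 1 := ⟨m - 1, by omega⟩
  obtain ⟨b, rfl⟩ : ∃ b, n = b + 1 := ⟨n - 1, by omega⟩
  set m := a + 1
  set n := b + 1
  -- abbreviations
  set FullA := fun p : ChainTS (m+1) × ChainTS (n+1) => p.1.rel 0 (Fin.last m) with hFA
  set StopA := fun p : ChainTS (m+1) × ChainTS (n+1) =>
    ∃ x : Fin (m+1), x.val < m ∧ p.1.rel x (Fin.last m) with hSA
  set StopB := fun p : ChainTS (m+1) × ChainTS (n+1) =>
    ∃ y : Fin (n+1), y.val < n ∧ p.2.rel y (Fin.last n) with hSB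
  have split1 := card_split (Compat (m := m) (n := n)) FullA
  have split2 := card_split (fun p => Compat p ∧ ¬ FullA p) StopA
  have split3 := card_split (fun p => (Compat p ∧ ¬ FullA p) ∧ ¬ StopA p) StopB
  -- piece 1 : both full
  have p1 : Nat.card {p : ChainTS (m+1) × ChainTS (n+1) // Compat p ∧ FullA p}
      = catalan m * catalan n := by
    rw [← card_full m, ← card_full n, ← Nat.card_prod]
    apply Nat.card_congr
    refine (Equiv.subtypeEquivRight ?_).trans
      (prodSubtypeEquiv (fun A : ChainTS (m+1) => A.rel 0 (Fin.last m))
        (fun B : ChainTS (n+1) => B.rel 0 (Fin.last n)))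
    intro p
    constructor
    · rintro ⟨⟨c1, c2, c3⟩, hf⟩; exact ⟨hf, c1.mp hf⟩
    · rintro ⟨hf1, hf2⟩
      exact ⟨⟨⟨fun _ => hf2, fun _ => hf1⟩,
        fun _ j hj => bot_fan _ hf2 j, fun _ i hi => bot_fan _ hf1 i⟩, hf1⟩
  -- piece 2 : A-side nontrivially under top, not full
  have p2 : Nat.card {p : ChainTS (m+1) × ChainTS (n+1) //
        (Compat p ∧ ¬ FullA p) ∧ StopA p}
      = (catalan (m+1) - 2 * catalan m) * catalan (n-1) := by
    have hW := card_SnF m (by omega)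
    have hside := card_side b
    rw [show catalan (m+1) - 2 * catalan m
        = Nat.card {A : ChainTS (m+1) //
            (∃ x : Fin (m+1), x.val < m ∧ A.rel x (Fin.last m)) ∧
            ¬ A.rel 0 (Fin.last m)} by omega,
      show catalan (n-1) = catalan b by rfl, ← hside, ← Nat.card_prod]
    apply Nat.card_congr
    refine (Equiv.subtypeEquivRight ?_).trans (prodSubtypeEquiv _ _)
    intro p
    constructor
    · rintro ⟨⟨⟨c1, c2, c3⟩, hnf⟩, hs⟩
      refine ⟨⟨hs, hnf⟩, ?_, c2 hs⟩
      intro y hy hrel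
      have hfB : p.2.rel 0 (Fin.last n) :=
        stop_ibf_full p.2 (by omega) ⟨y, hy, hrel⟩ (c2 hs)
      exact hnf (c1.mpr hfB)
    · rintro ⟨⟨hs, hnf⟩, hns, hibf⟩
      exact ⟨⟨⟨⟨fun h => absurd h hnf, fun h => absurd h (hns 0 (by simp))⟩,
        fun _ => hibf,
        fun hsB => absurd hsB (by rintro ⟨y, hy, hrel⟩; exact hns y hy hrel)⟩, hnf⟩, hs⟩
  -- piece 3 : B-side nontrivially under top, not full
  have p3 : Nat.card {p : ChainTS (m+1) × ChainTS (n+1) //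
        ((Compat p ∧ ¬ FullA p) ∧ ¬ StopA p) ∧ StopB p}
      = catalan (m-1) * (catalan (n+1) - 2 * catalan n) := by
    have hW := card_SnF n (by omega)
    have hside := card_side a
    rw [show catalan (n+1) - 2 * catalan n
        = Nat.card {B : ChainTS (n+1) //
            (∃ y : Fin (n+1), y.val < n ∧ B.rel y (Fin.last n)) ∧
            ¬ B.rel 0 (Fin.last n)} by omega,
      show catalan (m-1) = catalan a by rfl, ← hside, ← Nat.card_prod]
    apply Nat.card_congr
    refine (Equiv.subtypeEquivRight ?_).trans (prodSubtypeEquiv _ _)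
    intro p
    constructor
    · rintro ⟨⟨⟨⟨c1, c2, c3⟩, hnf⟩, hnsA⟩, hsB⟩
      refine ⟨⟨fun x hx hrel => hnsA ⟨x, hx, hrel⟩, c3 hsB⟩, hsB, ?_⟩
      intro hfB
      exact hnf (c1.mpr hfB)
    · rintro ⟨⟨hnsA, hibfA⟩, hsB, hnfB⟩
      have hnfA : ¬ p.1.rel 0 (Fin.last m) := by
        intro h; exact hnsA 0 (by simp) h
      exact ⟨⟨⟨⟨⟨fun h => absurd h hnfA, fun h => absurd h hnfB⟩,
        fun hsA => absurd hsA (by rintro ⟨x, hx, hrel⟩; exact hnsA x hx hrel),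
        fun _ => hibfA⟩, hnfA⟩,
        by rintro ⟨x, hx, hrel⟩; exact hnsA x hx hrel⟩, hsB⟩
  -- piece 4 : nothing relates to the top on either side
  have p4 : Nat.card {p : ChainTS (m+1) × ChainTS (n+1) //
        (((Compat p ∧ ¬ FullA p) ∧ ¬ StopA p) ∧ ¬ StopB p)}
      = catalan m * catalan n := by
    rw [← card_isolated m, ← card_isolated n, ← Nat.card_prod]
    apply Nat.card_congr
    refine (Equiv.subtypeEquivRight ?_).trans (prodSubtypeEquiv _ _)
    intro p
    constructor
    · rintro ⟨⟨⟨-, -⟩, hnsA⟩, hnsB⟩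
      exact ⟨fun x hx hrel => hnsA ⟨x, hx, hrel⟩, fun y hy hrel => hnsB ⟨y, hy, hrel⟩⟩
    · rintro ⟨hnsA, hnsB⟩
      have hnfA : ¬ p.1.rel 0 (Fin.last m) := fun h => hnsA 0 (by simp; omega) h
      have hnfB : ¬ p.2.rel 0 (Fin.last n) := fun h => hnsB 0 (by simp; omega) h
      exact ⟨⟨⟨⟨⟨fun h => absurd h hnfA, fun h => absurd h hnfB⟩,
        fun hsA => absurd hsA (by rintro ⟨x, hx, hrel⟩; exact hnsA x hx hrel),
        fun hsB => absurd hsB (by rintro ⟨y, hy, hrel⟩; exact hnsB y hy hrel)⟩, hnfA⟩,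
        by rintro ⟨x, hx, hrel⟩; exact hnsA x hx hrel⟩,
        by rintro ⟨y, hy, hrel⟩; exact hnsB y hy hrel⟩
  have hWm := card_SnF m (by omega)
  have hWn := card_SnF n (by omega)
  rw [split1, p1, split2, p2, split3, p3, p4]
  ring

end ChainTS


lemma TransferSystemPoset.ext' {P : Type*} [PartialOrder P]
    {R S : TransferSystemPoset P} (h : R.rel = S.rel) : R = S := by
  cases R; cases S; cases h; rfl

section FusionAux

variable {m n : ℕ} {F : Type*} [PartialOrder F] [BoundedOrder F]

/-- the union relation on the fusion -/
def fusionRel (iP : Fin (m+1) ↪o F) (iQ : Fin (n+1) ↪o F)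
    (A : ChainTS (m+1)) (B : ChainTS (n+1)) (f g : F) : Prop :=
  (∃ a b, iP a = f ∧ iP b = g ∧ A.rel a b) ∨
  (∃ c d, iQ c = f ∧ iQ d = g ∧ B.rel c d)

lemma fusionRel_swap (iP : Fin (m+1) ↪o F) (iQ : Fin (n+1) ↪o F)
    (A : ChainTS (m+1)) (B : ChainTS (n+1)) (f g : F) :
    fusionRel iQ iP B A f g ↔ fusionRel iP iQ A B f g := or_comm

lemma emb_eq_top (i : Fin (m+1) ↪o F) (htop : i ⊤ = ⊤) {a : Fin (m+1)} :
    i a = ⊤ ↔ a = ⊤ :=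
  ⟨fun h => i.injective (h.trans htop.symm), fun h => h ▸ htop⟩

/-- elements below a non-top point of the P-chain lie in the P-chain -/
lemma le_chain (iP : Fin (m+1) ↪o F) (iQ : Fin (n+1) ↪o F)
    (hPbot : iP ⊥ = ⊥) (hPtop : iP ⊤ = ⊤)
    (hint : ∀ (a : Fin (m + 1)) (b : Fin (n + 1)),
        iP a = iQ b → (a = ⊥ ∧ b = ⊥) ∨ (a = ⊤ ∧ b = ⊤))
    (horder : ∀ f g : F, f ≤ g ↔
        ((∃ a b, iP a = f ∧ iP b = g ∧ a ≤ b) ∨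
          (∃ a b, iQ a = f ∧ iQ b = g ∧ a ≤ b)))
    (v : F) (a : Fin (m+1)) (hva : v ≤ iP a) (ha : iP a ≠ ⊤) :
    ∃ p, p ≤ a ∧ iP p = v := by
  rcases (horder v (iP a)).mp hva with ⟨p, q, hp, hq, hpq⟩ | ⟨p, q, hp, hq, hpq⟩
  · exact ⟨p, by rwa [← iP.injective hq], hp⟩
  · rcases hint a q hq.symm with ⟨hab, hqb⟩ | ⟨hat, hqt⟩
    · refine ⟨⊥, hab ▸ le_refl _, ?_⟩
      rw [hPbot]
      have : v ≤ ⊥ := by rwa [hab, hPbot] at hva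
      exact (le_bot_iff.mp this).symm
    · exact absurd (hat ▸ hPtop) ha

/-- restriction of a transfer system on the fusion to the P-chain -/
def restrictChain (i : Fin (m+1) ↪o F) (htop : i ⊤ = ⊤)
    (hle : ∀ v a, v ≤ i a → i a ≠ ⊤ → ∃ p, p ≤ a ∧ i p = v)
    (R : TransferSystemPoset F) : ChainTS (m+1) where
  rel a b := R.rel (i a) (i b)
  refl a := R.refl _
  trans a b c h1 h2 := R.trans _ _ _ h1 h2
  le_of_rel a b h := i.le_iff_le.mp (R.le_of_rel _ _ h)
  restrict a b c hab hcb := by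
    refine R.restrict (i a) (i b) (i c) (i (min a c)) hab (i.monotone hcb)
      (i.monotone (min_le_left a c)) (i.monotone (min_le_right a c)) ?_
    intro v hv1 hv2 hv3
    rcases eq_or_ne a ⊤ with rfl | hat
    · have hmin : min (⊤ : Fin (m+1)) c = c := min_eq_right le_top
      rw [hmin] at hv3 ⊢
      exact le_antisymm hv2 hv3
    · rcases eq_or_ne c ⊤ with rfl | hct
      · have hmin : min a (⊤ : Fin (m+1)) = a := min_eq_left le_top
        rw [hmin] at hv3 ⊢
        exact le_antisymm hv1 hv3
      · obtain ⟨p, hpa, rfl⟩ := hle v a hv1 (fun h => hat ((emb_eq_top i htop).mp h))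
        have hpc : p ≤ c := i.le_iff_le.mp hv2
        have h1 : p ≤ min a c := le_min hpa hpc
        have h2 : min a c ≤ p := i.le_iff_le.mp hv3
        rw [le_antisymm h2 h1]

/-- transitivity across the two chains -/
lemma fusionTransMix (i1 : Fin (m+1) ↪o F) (i2 : Fin (n+1) ↪o F)
    (A : ChainTS (m+1)) (B : ChainTS (n+1))
    (hbot1 : i1 ⊥ = ⊥) (htop1 : i1 ⊤ = ⊤) (hbot2 : i2 ⊥ = ⊥) (htop2 : i2 ⊤ = ⊤)
    (hint12 : ∀ a b, i1 a = i2 b → (a = ⊥ ∧ b = ⊥) ∨ (a = ⊤ ∧ b = ⊤))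
    {f g h : F} (a b : Fin (m+1)) (ha : i1 a = f) (hb : i1 b = g) (hab : A.rel a b)
    (c d : Fin (n+1)) (hc : i2 c = g) (hd : i2 d = h) (hcd : B.rel c d) :
    fusionRel i1 i2 A B f h := by
  rcases hint12 b c (hb.trans hc.symm) with ⟨hbb, hcb⟩ | ⟨hbt, hct⟩
  · -- link point is ⊥
    have hab' : a = ⊥ := le_bot_iff.mp (hbb ▸ A.le_of_rel a b hab)
    refine Or.inr ⟨⊥, d, ?_, hd, ?_⟩
    · rw [hbot2, ← ha, hab', hbot1]
    · rw [← hcb]; exact hcd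
  · -- link point is ⊤
    have hdt : d = ⊤ := top_le_iff.mp (hct ▸ B.le_of_rel c d hcd)
    refine Or.inl ⟨a, ⊤, ha, ?_, ?_⟩
    · rw [htop1, ← hd, hdt, htop2]
    · rw [← hbt]; exact hab

/-- the restriction axiom, in the case where the original relation lies in
the first chain -/
lemma fusionRestrictAux (i1 : Fin (m+1) ↪o F) (i2 : Fin (n+1) ↪o F)
    (A : ChainTS (m+1)) (B : ChainTS (n+1))
    (hbt1 : (⊥ : Fin (m+1)) ≠ ⊤)
    (hbot1 : i1 ⊥ = ⊥) (htop1 : i1 ⊤ = ⊤) (hbot2 : i2 ⊥ = ⊥) (htop2 : i2 ⊤ = ⊤)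
    (hint12 : ∀ a b, i1 a = i2 b → (a = ⊥ ∧ b = ⊥) ∨ (a = ⊤ ∧ b = ⊤))
    (hle1 : ∀ v a, v ≤ i1 a → i1 a ≠ ⊤ → ∃ p, p ≤ a ∧ i1 p = v)
    (hle2 : ∀ v c, v ≤ i2 c → i2 c ≠ ⊤ → ∃ q, q ≤ c ∧ i2 q = v)
    (hsurj12 : ∀ f : F, (∃ a, i1 a = f) ∨ (∃ b, i2 b = f))
    (hc : ∀ d : Fin (n+1), d ≠ ⊤ → (∃ x : Fin (m+1), x ≠ ⊤ ∧ A.rel x ⊤) → B.rel ⊥ d)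
    (a b : Fin (m+1)) (hab : A.rel a b) (z w : F)
    (hz : z ≤ i1 b) (hw1 : w ≤ i1 a) (hw2 : w ≤ z)
    (hmax : ∀ v, v ≤ i1 a → v ≤ z → w ≤ v → v = w) :
    fusionRel i1 i2 A B w z := by
  -- same-chain case, given a representation of z in the first chain
  have samechain : ∀ c : Fin (m+1), i1 c = z → c ≤ b → fusionRel i1 i2 A B w z := by
    intro c hcz hcb
    rcases eq_or_ne a ⊤ with rfl | hat
    · -- x is the top: w is forced to be z
      have hzw : z = w := hmax z (le_top.trans htop1.symm.le) (le_refl z) hw2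
      exact Or.inl ⟨c, c, hzw ▸ hcz, hcz, A.refl c⟩
    · rcases eq_or_ne c ⊤ with rfl | hct
      · -- z is the top: w is forced to be i1 a
        have hbt : b = ⊤ := top_le_iff.mp hcb
        have haw : i1 a = w := hmax (i1 a) (le_refl _) (by rw [← hcz]; exact i1.monotone le_top) hw1
        exact Or.inl ⟨a, ⊤, haw, hcz, by rw [← hbt]; exact hab⟩
      · -- generic case: w is the meet i1 (min a c)
        obtain ⟨p, hpa, hpw⟩ := hle1 w a hw1 (fun h => hat ((emb_eq_top i1 htop1).mp h))
        have hpc : p ≤ c := i1.le_iff_le.mp (by rw [hpw, hcz] at *; exact hpw ▸ hw2)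
        have hminw : i1 (min a c) = w :=
          hmax (i1 (min a c)) (i1.monotone (min_le_left a c))
            (by rw [← hcz]; exact i1.monotone (min_le_right a c))
            (by rw [← hpw]; exact i1.monotone (le_min hpa hpc))
        exact Or.inl ⟨min a c, c, hminw, hcz, A.restrict a b c hab hcb⟩
  rcases eq_or_ne (i1 b) ⊤ with hbt | hbt
  · -- b is the top of the fusion
    have hbtop : b = ⊤ := (emb_eq_top i1 htop1).mp hbt
    rcases hsurj12 z with ⟨c, hcz⟩ | ⟨d, hdz⟩
    · exact samechain c hcz (hbtop ▸ le_top)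
    · -- z is in the second chain
      rcases eq_or_ne d ⊤ with rfl | hdt
      · -- z = ⊤ : also representable in the first chain
        exact samechain ⊤ (by rw [htop1, ← hdz, htop2]) (by rw [hbtop])
      · rcases eq_or_ne (i1 a) ⊤ with hat | hat
        · -- x = ⊤ : w is forced to be z
          have hzw : z = w := hmax z (le_top.trans hat.symm.le) (le_refl z) hw2
          exact Or.inr ⟨d, d, hzw ▸ hdz, hdz, B.refl d⟩
        · -- generic: w is forced to be ⊥
          obtain ⟨p, hpa, hpw⟩ := hle1 w a hw1 hat
          obtain ⟨q, hqd, hqw⟩ := hle2 w d (hdz ▸ hw2)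
            (fun h => hdt ((emb_eq_top i2 htop2).mp h))
          have hweq : w = ⊥ := by
            rcases hint12 p q (hpw.trans hqw.symm) with ⟨hpb, -⟩ | ⟨hpt, -⟩
            · rw [← hpw, hpb, hbot1]
            · exfalso
              apply hat
              refine le_antisymm le_top ?_
              rw [← htop1, ← hpt, hpw]
              exact hw1
          refine Or.inr ⟨⊥, d, by rw [hbot2, hweq], hdz, ?_⟩
          rcases eq_or_ne a ⊥ with rfl | hab0
          · exact hc d hdt ⟨⊥, hbt1, by rw [← hbtop]; exact hab⟩
          · exact hc d hdt ⟨a, fun h => hat (h ▸ htop1), by rw [← hbtop]; exact hab⟩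
  · -- b below the top: z lies in the first chain
    obtain ⟨c, hcb, hcz⟩ := hle1 z b hz hbt
    exact samechain c hcz hcb

end FusionAux

open ChainTS in
/-- for m, n ≥ 1, the number of transfer systems on the fusion
[m] * [n] of the total orders [m] = Fin (m+1) and [n] = Fin (n+1) is
2·Cat(n)·Cat(m) + Cat(n−1)·(Cat(m+1) − 2·Cat(m)) + Cat(m−1)·(Cat(n+1) − 2·Cat(n));
in particular for m = n it equals 2·(Cat(n)² + Cat(n−1)·(Cat(n+1) − 2·Cat(n))).
Here `F` together with the embeddings `iP`, `iQ` is the fusion: the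
embeddings preserve ⊥ and ⊤, are jointly surjective, their images meet only
in {⊥, ⊤}, and the order on `F` is the union of the two chain orders. -/
theorem stmt17 (m n : ℕ) (hm : 1 ≤ m) (hn : 1 ≤ n)
    (F : Type*) [PartialOrder F] [BoundedOrder F]
    (iP : Fin (m + 1) ↪o F) (iQ : Fin (n + 1) ↪o F)
    (hPbot : iP ⊥ = ⊥) (hPtop : iP ⊤ = ⊤)
    (hQbot : iQ ⊥ = ⊥) (hQtop : iQ ⊤ = ⊤)
    (hsurj : ∀ f : F, (∃ a, iP a = f) ∨ (∃ b, iQ b = f))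
    (hint : ∀ (a : Fin (m + 1)) (b : Fin (n + 1)),
        iP a = iQ b → (a = ⊥ ∧ b = ⊥) ∨ (a = ⊤ ∧ b = ⊤))
    (horder : ∀ f g : F, f ≤ g ↔
        ((∃ a b, iP a = f ∧ iP b = g ∧ a ≤ b) ∨
          (∃ a b, iQ a = f ∧ iQ b = g ∧ a ≤ b))) :
    Nat.card (TransferSystemPoset F) =
      2 * catalan n * catalan m
        + catalan (n - 1) * (catalan (m + 1) - 2 * catalan m)
        + catalan (m - 1) * (catalan (n + 1) - 2 * catalan n) ∧
    (m = n → Nat.card (TransferSystemPoset F) =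
      2 * (catalan n ^ 2 + catalan (n - 1) * (catalan (n + 1) - 2 * catalan n))) := by
  classical
  -- mirrored hypotheses
  have hint' : ∀ (b : Fin (n + 1)) (a : Fin (m + 1)),
      iQ b = iP a → (b = ⊥ ∧ a = ⊥) ∨ (b = ⊤ ∧ a = ⊤) :=
    fun b a h => (hint a b h.symm).imp (fun ⟨x, y⟩ => ⟨y, x⟩) (fun ⟨x, y⟩ => ⟨y, x⟩)
  have horder' : ∀ f g : F, f ≤ g ↔
      ((∃ a b, iQ a = f ∧ iQ b = g ∧ a ≤ b) ∨
        (∃ a b, iP a = f ∧ iP b = g ∧ a ≤ b)) :=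
    fun f g => (horder f g).trans or_comm
  have hsurj' : ∀ f : F, (∃ b, iQ b = f) ∨ (∃ a, iP a = f) := fun f => (hsurj f).symm
  have hleP := le_chain iP iQ hPbot hPtop hint horder
  have hleQ := le_chain iQ iP hQbot hQtop hint' horder'
  -- notation conversions
  have hbzP : (⊥ : Fin (m + 1)) = 0 := rfl
  have hbzQ : (⊥ : Fin (n + 1)) = 0 := rfl
  have htlP : (⊤ : Fin (m + 1)) = Fin.last m := rfl
  have htlQ : (⊤ : Fin (n + 1)) = Fin.last n := rfl
  have hbt1 : (⊥ : Fin (m + 1)) ≠ ⊤ := by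
    rw [hbzP, htlP, Ne, Fin.ext_iff, Fin.val_zero, Fin.val_last]; omega
  have hbt2 : (⊥ : Fin (n + 1)) ≠ ⊤ := by
    rw [hbzQ, htlQ, Ne, Fin.ext_iff, Fin.val_zero, Fin.val_last]; omega
  have hneP : ∀ x : Fin (m + 1), x ≠ ⊤ ↔ x.val < m := fun x => by
    have := x.isLt
    rw [htlP, Ne, Fin.ext_iff, Fin.val_last]; omega
  have hneQ : ∀ y : Fin (n + 1), y ≠ ⊤ ↔ y.val < n := fun y => by
    have := y.isLt
    rw [htlQ, Ne, Fin.ext_iff, Fin.val_last]; omega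
  have hP0 : iP 0 = ⊥ := by rw [← hbzP]; exact hPbot
  have hQ0 : iQ 0 = ⊥ := by rw [← hbzQ]; exact hQbot
  have hPl : iP (Fin.last m) = ⊤ := by rw [← htlP]; exact hPtop
  have hQl : iQ (Fin.last n) = ⊤ := by rw [← htlQ]; exact hQtop
  -- the key equivalence
  have key : Nat.card (TransferSystemPoset F) =
      Nat.card {p : ChainTS (m + 1) × ChainTS (n + 1) // Compat p} := by
    apply Nat.card_congr
    refine ⟨fun R => ⟨(restrictChain iP hPtop hleP R, restrictChain iQ hQtop hleQ R),
      ?_, ?_, ?_⟩, fun p => ?_, ?_, ?_⟩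
    -- compat 1
    · show R.rel (iP 0) (iP (Fin.last m)) ↔ R.rel (iQ 0) (iQ (Fin.last n))
      rw [hP0, hQ0, hPl, hQl]
    -- compat 2
    · rintro ⟨x, hx, hrel⟩ j hj
      show R.rel (iQ 0) (iQ j)
      rw [hQ0]
      refine R.restrict (iP x) (iP (Fin.last m)) (iQ j) ⊥ hrel
        (by rw [hPl]; exact le_top) bot_le bot_le ?_
      intro v hv1 hv2 _
      obtain ⟨p, hpx, rfl⟩ := hleP v x hv1
        (fun h => absurd ((emb_eq_top iP hPtop).mp h) ((hneP x).mpr hx))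
      obtain ⟨q, hqj, hq⟩ := hleQ (iP p) j hv2
        (fun h => absurd ((emb_eq_top iQ hQtop).mp h) ((hneQ j).mpr hj))
      rcases hint p q hq.symm with ⟨hpb, -⟩ | ⟨hpt, -⟩
      · rw [hpb, hPbot]
      · exfalso
        have : iP x = ⊤ := le_antisymm le_top (by rw [← hPtop, ← hpt]; exact hv1)
        exact absurd ((emb_eq_top iP hPtop).mp this) ((hneP x).mpr hx)
    -- compat 3
    · rintro ⟨y, hy, hrel⟩ i hi
      show R.rel (iP 0) (iP i)
      rw [hP0]
      refine R.restrict (iQ y) (iQ (Fin.last n)) (iP i) ⊥ hrel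
        (by rw [hQl]; exact le_top) bot_le bot_le ?_
      intro v hv1 hv2 _
      obtain ⟨q, hqy, rfl⟩ := hleQ v y hv1
        (fun h => absurd ((emb_eq_top iQ hQtop).mp h) ((hneQ y).mpr hy))
      obtain ⟨p, hpi, hp⟩ := hleP (iQ q) i hv2
        (fun h => absurd ((emb_eq_top iP hPtop).mp h) ((hneP i).mpr hi))
      rcases hint' q p hp.symm with ⟨hqb, -⟩ | ⟨hqt, -⟩
      · rw [hqb, hQbot]
      · exfalso
        have : iQ y = ⊤ := le_antisymm le_top (by rw [← hQtop, ← hqt]; exact hv1)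
        exact absurd ((emb_eq_top iQ hQtop).mp this) ((hneQ y).mpr hy)
    -- the inverse construction
    · obtain ⟨⟨A, B⟩, c1, c2, c3⟩ := p
      have hcA : ∀ d : Fin (n + 1), d ≠ ⊤ →
          (∃ x : Fin (m + 1), x ≠ ⊤ ∧ A.rel x ⊤) → B.rel ⊥ d := by
        rintro d hd ⟨x, hx, hrel⟩
        rw [hbzQ]
        exact c2 ⟨x, (hneP x).mp hx, by rw [← htlP]; exact hrel⟩ d ((hneQ d).mp hd)
      have hcB : ∀ d : Fin (m + 1), d ≠ ⊤ →
          (∃ y : Fin (n + 1), y ≠ ⊤ ∧ B.rel y ⊤) → A.rel ⊥ d := by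
        rintro d hd ⟨y, hy, hrel⟩
        rw [hbzP]
        exact c3 ⟨y, (hneQ y).mp hy, by rw [← htlQ]; exact hrel⟩ d ((hneP d).mp hd)
      exact
      { rel := fusionRel iP iQ A B
        refl := fun f => by
          rcases hsurj f with ⟨a, rfl⟩ | ⟨b, rfl⟩
          · exact Or.inl ⟨a, a, rfl, rfl, A.refl a⟩
          · exact Or.inr ⟨b, b, rfl, rfl, B.refl b⟩
        trans := by
          rintro f g h (⟨a, b, ha, hb, hab⟩ | ⟨c, d, hc, hd, hcd⟩)
            (⟨a', b', ha', hb', hab'⟩ | ⟨c', d', hc', hd', hcd'⟩)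
          · have : a' = b := iP.injective (ha'.trans hb.symm)
            exact Or.inl ⟨a, b', ha, hb', A.trans _ _ _ hab (this ▸ hab')⟩
          · exact fusionTransMix iP iQ A B hPbot hPtop hQbot hQtop hint
              a b ha hb hab c' d' hc' hd' hcd'
          · exact (fusionRel_swap iP iQ A B f h).mp
              (fusionTransMix iQ iP B A hQbot hQtop hPbot hPtop hint'
                c d hc hd hcd a' b' ha' hb' hab')
          · have : c' = d := iQ.injective (hc'.trans hd.symm)
            exact Or.inr ⟨c, d', hc, hd', B.trans _ _ _ hcd (this ▸ hcd')⟩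
        le_of_rel := by
          rintro f g (⟨a, b, ha, hb, hab⟩ | ⟨c, d, hc, hd, hcd⟩)
          · exact (horder f g).mpr (Or.inl ⟨a, b, ha, hb, A.le_of_rel _ _ hab⟩)
          · exact (horder f g).mpr (Or.inr ⟨c, d, hc, hd, B.le_of_rel _ _ hcd⟩)
        restrict := by
          rintro x y z w (⟨a, b, ha, hb, hab⟩ | ⟨c, d, hc, hd, hcd⟩) hz hw1 hw2 hmax
          · exact fusionRestrictAux iP iQ A B hbt1 hPbot hPtop hQbot hQtop hint
              hleP hleQ hsurj hcA a b hab z w (hb ▸ hz) (ha ▸ hw1) hw2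
              (by rw [ha]; exact hmax)
          · exact (fusionRel_swap iP iQ A B w z).mp
              (fusionRestrictAux iQ iP B A hbt2 hQbot hQtop hPbot hPtop hint'
                hleQ hleP hsurj' hcB c d hcd z w (hd ▸ hz) (hc ▸ hw1) hw2
                (by rw [hc]; exact hmax)) }
    -- left inverse
    · intro R
      apply TransferSystemPoset.ext'
      funext f g
      apply propext
      constructor
      · rintro (⟨a, b, ha, hb, hab⟩ | ⟨c, d, hc, hd, hcd⟩)
        · rw [← ha, ← hb]; exact hab
        · rw [← hc, ← hd]; exact hcd
      · intro hR
        rcases (horder f g).mp (R.le_of_rel f g hR) with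
          ⟨a, b, ha, hb, -⟩ | ⟨c, d, hc, hd, -⟩
        · exact Or.inl ⟨a, b, ha, hb, show R.rel (iP a) (iP b) by rw [ha, hb]; exact hR⟩
        · exact Or.inr ⟨c, d, hc, hd, show R.rel (iQ c) (iQ d) by rw [hc, hd]; exact hR⟩
    -- right inverse
    · rintro ⟨⟨A, B⟩, c1, c2, c3⟩
      apply Subtype.ext
      apply Prod.ext
      · apply ChainTS.ext''
        intro a b
        constructor
        · rintro (⟨a', b', ha', hb', hab'⟩ | ⟨c, d, hc, hd, hcd⟩)
          · rwa [iP.injective ha', iP.injective hb'] at hab'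
          · rcases hint a c hc.symm with ⟨rfl, rfl⟩ | ⟨rfl, rfl⟩
            · rcases hint b d hd.symm with ⟨rfl, rfl⟩ | ⟨rfl, rfl⟩
              · exact A.refl _
              · rw [hbzP, htlP]
                exact c1.mpr (by rw [← hbzQ, ← htlQ]; exact hcd)
            · rcases hint b d hd.symm with ⟨rfl, rfl⟩ | ⟨rfl, rfl⟩
              · exact absurd (le_antisymm (B.le_of_rel _ _ hcd) bot_le).symm hbt2
              · exact A.refl _
        · intro hab
          exact Or.inl ⟨a, b, rfl, rfl, hab⟩
      · apply ChainTS.ext''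
        intro c d
        constructor
        · rintro (⟨a, b, ha, hb, hab⟩ | ⟨c', d', hc', hd', hcd'⟩)
          · rcases hint a c ha with ⟨rfl, rfl⟩ | ⟨rfl, rfl⟩
            · rcases hint b d hb with ⟨rfl, rfl⟩ | ⟨rfl, rfl⟩
              · exact B.refl _
              · rw [hbzQ, htlQ]
                exact c1.mp (by rw [← hbzP, ← htlP]; exact hab)
            · rcases hint b d hb with ⟨rfl, rfl⟩ | ⟨rfl, rfl⟩
              · exact absurd (le_antisymm (A.le_of_rel _ _ hab) bot_le).symm hbt1
              · exact B.refl _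
          · rwa [iQ.injective hc', iQ.injective hd'] at hcd'
        · intro hcd
          exact Or.inr ⟨c, d, rfl, rfl, hcd⟩
  have main : Nat.card (TransferSystemPoset F) =
      2 * catalan n * catalan m
        + catalan (n - 1) * (catalan (m + 1) - 2 * catalan m)
        + catalan (m - 1) * (catalan (n + 1) - 2 * catalan n) := by
    rw [key, card_compat m n hm hn]
  refine ⟨main, fun hmn => ?_⟩
  subst hmn
  rw [main]
  ring
end

section
/- For every integer n ≥ 1, the number of transfer systems on the n-fold iterated fusion [2]^{*n} of [2] = {0 < 1 < 2} with itself is |Tr([2]^{*n})| = 2^{n+1} + n (where [2]^{*1} = [2]). -/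
section Aux

theorem TransferSystemPoset.ext'_s18 {P : Type*} [PartialOrder P]
    (T1 T2 : TransferSystemPoset P) (h : T1.rel = T2.rel) : T1 = T2 := by
  cases T1; cases T2; cases h; rfl

variable {n : ℕ} {F : Type*} [PartialOrder F] [BoundedOrder F]

/-- The relation encoded by data `(A, b, B)`. -/
def auxRel (mid : Fin n → F) (A : Set (Fin n)) (b : Prop) (B : Set (Fin n))
    (x y : F) : Prop :=
  x = y ∨ (x = ⊥ ∧ y = ⊤ ∧ b) ∨ (∃ i ∈ A, x = ⊥ ∧ y = mid i) ∨
    (∃ i ∈ B, x = mid i ∧ y = ⊤)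

theorem auxRel_congr (mid : Fin n → F) {A A' B B' : Set (Fin n)} {b b' : Prop}
    (hA : A = A') (hb : b ↔ b') (hB : B = B') :
    auxRel mid A b B = auxRel mid A' b' B' := by
  cases propext hb; cases hA; cases hB; rfl

theorem auxRel_bot_top (mid : Fin n → F) (A : Set (Fin n)) (b : Prop)
    (B : Set (Fin n)) (hmb : ∀ i, mid i ≠ ⊥) (hmt : ∀ i, mid i ≠ ⊤)
    (hbt : (⊥ : F) ≠ ⊤) :
    auxRel mid A b B ⊥ ⊤ ↔ b := by
  constructor
  · rintro (h | ⟨-, -, hb⟩ | ⟨i, -, -, h⟩ | ⟨i, -, h, -⟩)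
    · exact absurd h hbt
    · exact hb
    · exact absurd h.symm (hmt i)
    · exact absurd h.symm (hmb i)
  · intro hb; exact Or.inr (Or.inl ⟨rfl, rfl, hb⟩)

theorem auxRel_bot_mid (mid : Fin n → F) (A : Set (Fin n)) (b : Prop)
    (B : Set (Fin n)) (hinj : Function.Injective mid)
    (hmb : ∀ i, mid i ≠ ⊥) (hmt : ∀ i, mid i ≠ ⊤) (i : Fin n) :
    auxRel mid A b B ⊥ (mid i) ↔ i ∈ A := by
  constructor
  · rintro (h | ⟨-, h, -⟩ | ⟨j, hj, -, h⟩ | ⟨j, -, h, -⟩)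
    · exact absurd h.symm (hmb i)
    · exact absurd h (hmt i)
    · exact (hinj h.symm) ▸ hj
    · exact absurd h.symm (hmb j)
  · intro hi; exact Or.inr (Or.inr (Or.inl ⟨i, hi, rfl, rfl⟩))

theorem auxRel_mid_top (mid : Fin n → F) (A : Set (Fin n)) (b : Prop)
    (B : Set (Fin n)) (hinj : Function.Injective mid)
    (hmb : ∀ i, mid i ≠ ⊥) (hmt : ∀ i, mid i ≠ ⊤) (i : Fin n) :
    auxRel mid A b B (mid i) ⊤ ↔ i ∈ B := by
  constructor
  · rintro (h | ⟨h, -, -⟩ | ⟨j, -, h, -⟩ | ⟨j, hj, h, -⟩)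
    · exact absurd h (hmt i)
    · exact absurd h (hmb i)
    · exact absurd h (hmb i)
    · exact (hinj h) ▸ hj
  · intro hi; exact Or.inr (Or.inr (Or.inr ⟨i, hi, rfl, rfl⟩))

/-- The transfer system encoded by admissible data `(A, b, B)`. -/
def auxTS (mid : Fin n → F)
    (hinj : Function.Injective mid)
    (hsurj : ∀ x : F, x = ⊥ ∨ x = ⊤ ∨ ∃ i, x = mid i)
    (hmb : ∀ i, mid i ≠ ⊥) (hmt : ∀ i, mid i ≠ ⊤) (hbt : (⊥ : F) ≠ ⊤)
    (hlemid : ∀ x i, x ≤ mid i → x = ⊥ ∨ x = mid i)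
    (hmm : ∀ i j, mid i ≤ mid j → i = j)
    (A : Set (Fin n)) (b : Prop) (B : Set (Fin n))
    (h1 : b → ∀ i, i ∈ A)
    (h2 : ∀ i, i ∈ B → ∀ j, j ≠ i → j ∈ A)
    (h3 : ∀ i, i ∈ A → i ∈ B → b) :
    TransferSystemPoset F where
  rel := auxRel mid A b B
  refl := fun _ => Or.inl rfl
  trans := by
    rintro x y z (rfl | ⟨rfl, rfl, hb⟩ | ⟨i, hi, rfl, rfl⟩ | ⟨i, hi, rfl, rfl⟩) hyz
    · exact hyz
    · -- x = ⊥, y = ⊤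
      rcases hyz with rfl | ⟨h, -, -⟩ | ⟨j, -, h, -⟩ | ⟨j, -, h, -⟩
      · exact Or.inr (Or.inl ⟨rfl, rfl, hb⟩)
      · exact absurd h.symm hbt
      · exact absurd h.symm hbt
      · exact absurd h.symm (hmt j)
    · -- x = ⊥, y = mid i, i ∈ A
      rcases hyz with rfl | ⟨h, -, -⟩ | ⟨j, -, h, -⟩ | ⟨j, hj, h, rfl⟩
      · exact Or.inr (Or.inr (Or.inl ⟨i, hi, rfl, rfl⟩))
      · exact absurd h (hmb i)
      · exact absurd h (hmb i)
      · exact Or.inr (Or.inl ⟨rfl, rfl, h3 i hi ((hinj h) ▸ hj)⟩)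
    · -- x = mid i, y = ⊤, i ∈ B
      rcases hyz with rfl | ⟨h, -, -⟩ | ⟨j, -, h, -⟩ | ⟨j, -, h, -⟩
      · exact Or.inr (Or.inr (Or.inr ⟨i, hi, rfl, rfl⟩))
      · exact absurd h.symm hbt
      · exact absurd h.symm hbt
      · exact absurd h.symm (hmt j)
  le_of_rel := by
    rintro x y (rfl | ⟨rfl, rfl, -⟩ | ⟨i, -, rfl, rfl⟩ | ⟨i, -, rfl, rfl⟩)
    · exact le_rfl
    · exact bot_le
    · exact bot_le
    · exact le_top
  restrict := by
    rintro x y z w hxy hzy hwx hwz hmax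
    rcases hxy with rfl | ⟨rfl, rfl, hb⟩ | ⟨i, hi, rfl, rfl⟩ | ⟨i, hi, rfl, rfl⟩
    · -- x = y
      have : z = w := hmax z hzy le_rfl hwz
      exact Or.inl this.symm
    · -- x = ⊥, y = ⊤, b
      have hw : w = ⊥ := le_bot_iff.mp hwx
      subst hw
      rcases hsurj z with rfl | rfl | ⟨j, rfl⟩
      · exact Or.inl rfl
      · exact Or.inr (Or.inl ⟨rfl, rfl, hb⟩)
      · exact Or.inr (Or.inr (Or.inl ⟨j, h1 hb j, rfl, rfl⟩))
    · -- x = ⊥, y = mid i, i ∈ A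
      have hw : w = ⊥ := le_bot_iff.mp hwx
      subst hw
      rcases hlemid z i hzy with rfl | rfl
      · exact Or.inl rfl
      · exact Or.inr (Or.inr (Or.inl ⟨i, hi, rfl, rfl⟩))
    · -- x = mid i, y = ⊤, i ∈ B
      rcases hsurj z with rfl | rfl | ⟨j, rfl⟩
      · exact Or.inl (le_bot_iff.mp hwz)
      · have : mid i = w := hmax (mid i) le_rfl le_top hwx
        exact Or.inr (Or.inr (Or.inr ⟨i, hi, this.symm, rfl⟩))
      · by_cases hij : j = i
        · subst hij
          have : mid j = w := hmax (mid j) le_rfl le_rfl hwx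
          exact Or.inl this.symm
        · have hw : w = ⊥ := by
            rcases hlemid w i hwx with rfl | rfl
            · rfl
            · exact absurd (hmm i j hwz) (fun h => hij h.symm)
          subst hw
          exact Or.inr (Or.inr (Or.inl ⟨j, h2 i hi j hij, rfl, rfl⟩))

end Aux

/-- for n ≥ 1, the number of transfer systems on the n-fold
iterated fusion [2]^{*n} is 2^{n+1} + n. Here `F` is the bounded poset
consisting of a least element ⊥, a greatest element ⊤, and n pairwise
incomparable middle elements `mid i` strictly between ⊥ and ⊤ (the
description of [2]^{*n}). -/
theorem stmt18 (n : ℕ) (hn : 1 ≤ n)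
    (F : Type*) [PartialOrder F] [BoundedOrder F]
    (mid : Fin n → F)
    (hinj : Function.Injective mid)
    (hstrict : ∀ i, ⊥ < mid i ∧ mid i < ⊤)
    (hsurj : ∀ x : F, x = ⊥ ∨ x = ⊤ ∨ ∃ i, x = mid i)
    (hincomp : ∀ i j, i ≠ j → ¬ mid i ≤ mid j) :
    Nat.card (TransferSystemPoset F) = 2 ^ (n + 1) + n := by
  classical
  obtain ⟨i0⟩ : Nonempty (Fin n) := ⟨⟨0, hn⟩⟩
  have hbt : (⊥ : F) ≠ ⊤ := ((hstrict i0).1.trans (hstrict i0).2).ne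
  have hmb : ∀ i, mid i ≠ ⊥ := fun i => (hstrict i).1.ne'
  have hmt : ∀ i, mid i ≠ ⊤ := fun i => (hstrict i).2.ne
  have hmm : ∀ i j, mid i ≤ mid j → i = j := by
    intro i j h
    by_contra hne
    exact hincomp i j hne h
  have hlemid : ∀ x i, x ≤ mid i → x = ⊥ ∨ x = mid i := by
    intro x i hx
    rcases hsurj x with rfl | rfl | ⟨j, rfl⟩
    · exact Or.inl rfl
    · exact absurd hx (hstrict i).2.not_ge
    · exact Or.inr (congrArg mid (hmm j i hx))
  -- the codes
  let cA : (Finset (Fin n) ⊕ Finset (Fin n) ⊕ Fin n) → Set (Fin n) := fun c =>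
    match c with
    | .inl _ => Set.univ
    | .inr (.inl A) => ↑A
    | .inr (.inr i) => {i}ᶜ
  let cb : (Finset (Fin n) ⊕ Finset (Fin n) ⊕ Fin n) → Prop := fun c =>
    match c with
    | .inl _ => True
    | .inr _ => False
  let cB : (Finset (Fin n) ⊕ Finset (Fin n) ⊕ Fin n) → Set (Fin n) := fun c =>
    match c with
    | .inl B => ↑B
    | .inr (.inl _) => (∅ : Set (Fin n))
    | .inr (.inr i) => {i}
  have ch1 : ∀ c : (Finset (Fin n) ⊕ Finset (Fin n) ⊕ Fin n), cb c → ∀ i, i ∈ cA c := by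
    rintro (B | A | i) hb j
    · exact Set.mem_univ j
    · exact absurd hb id
    · exact absurd hb id
  have ch2 : ∀ c : (Finset (Fin n) ⊕ Finset (Fin n) ⊕ Fin n), ∀ i, i ∈ cB c → ∀ j, j ≠ i → j ∈ cA c := by
    rintro (B | A | i0') i hi j hj
    · exact Set.mem_univ j
    · exact absurd hi (Set.notMem_empty i)
    · have : i = i0' := hi
      subst this
      exact hj
  have ch3 : ∀ c : (Finset (Fin n) ⊕ Finset (Fin n) ⊕ Fin n), ∀ i, i ∈ cA c → i ∈ cB c → cb c := by
    rintro (B | A | i0') i hiA hiB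
    · trivial
    · exact absurd hiB (Set.notMem_empty i)
    · have : i = i0' := hiB
      exact absurd this hiA
  let f : (Finset (Fin n) ⊕ Finset (Fin n) ⊕ Fin n) → TransferSystemPoset F := fun c =>
    auxTS mid hinj hsurj hmb hmt hbt hlemid hmm (cA c) (cb c) (cB c)
      (ch1 c) (ch2 c) (ch3 c)
  have hfrel : ∀ c : (Finset (Fin n) ⊕ Finset (Fin n) ⊕ Fin n), (f c).rel = auxRel mid (cA c) (cb c) (cB c) :=
    fun c => rfl
  -- injectivity
  have hfinj : Function.Injective f := by
    intro c1 c2 hc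
    have hrel : auxRel mid (cA c1) (cb c1) (cB c1)
        = auxRel mid (cA c2) (cb c2) (cB c2) := by
      rw [← hfrel c1, ← hfrel c2, hc]
    have hA : ∀ i, i ∈ cA c1 ↔ i ∈ cA c2 := by
      intro i
      rw [← auxRel_bot_mid mid (cA c1) (cb c1) (cB c1) hinj hmb hmt i,
        ← auxRel_bot_mid mid (cA c2) (cb c2) (cB c2) hinj hmb hmt i, hrel]
    have hB : ∀ i, i ∈ cB c1 ↔ i ∈ cB c2 := by
      intro i
      rw [← auxRel_mid_top mid (cA c1) (cb c1) (cB c1) hinj hmb hmt i,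
        ← auxRel_mid_top mid (cA c2) (cb c2) (cB c2) hinj hmb hmt i, hrel]
    have hb : cb c1 ↔ cb c2 := by
      rw [← auxRel_bot_top mid (cA c1) (cb c1) (cB c1) hmb hmt hbt,
        ← auxRel_bot_top mid (cA c2) (cb c2) (cB c2) hmb hmt hbt, hrel]
    rcases c1 with B1 | A1 | i1 <;> rcases c2 with B2 | A2 | i2
    · exact congrArg Sum.inl (Finset.ext fun i => by simpa [cB] using hB i)
    · exact absurd (hb.mp trivial) id
    · exact absurd (hb.mp trivial) id
    · exact absurd (hb.mpr trivial) id
    · exact congrArg (Sum.inr ∘ Sum.inl)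
        (Finset.ext fun i => by simpa [cA] using hA i)
    · exact absurd ((hB i2).mpr rfl) (Set.notMem_empty i2)
    · exact absurd (hb.mpr trivial) id
    · exact absurd ((hB i1).mp rfl) (Set.notMem_empty i1)
    · have : i1 = i2 := (hB i1).mp rfl
      exact congrArg (Sum.inr ∘ Sum.inr) this
  -- surjectivity
  have hfsurj : Function.Surjective f := by
    intro T
    set AT : Set (Fin n) := {i | T.rel ⊥ (mid i)} with hAT
    set BT : Set (Fin n) := {i | T.rel (mid i) ⊤} with hBT
    have hTrel : T.rel = auxRel mid AT (T.rel ⊥ ⊤) BT := by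
      funext x y
      apply propext
      constructor
      · intro h
        rcases hsurj x with rfl | rfl | ⟨i, rfl⟩
        · rcases hsurj y with rfl | rfl | ⟨j, rfl⟩
          · exact Or.inl rfl
          · exact Or.inr (Or.inl ⟨rfl, rfl, h⟩)
          · exact Or.inr (Or.inr (Or.inl ⟨j, h, rfl, rfl⟩))
        · have : y = ⊤ := top_le_iff.mp (T.le_of_rel _ _ h)
          exact Or.inl this.symm
        · rcases hsurj y with rfl | rfl | ⟨j, rfl⟩
          · exact absurd (le_bot_iff.mp (T.le_of_rel _ _ h)) (hmb i)
          · exact Or.inr (Or.inr (Or.inr ⟨i, h, rfl, rfl⟩))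
          · have := hmm i j (T.le_of_rel _ _ h)
            exact Or.inl (congrArg mid this)
      · rintro (rfl | ⟨rfl, rfl, hb⟩ | ⟨i, hi, rfl, rfl⟩ | ⟨i, hi, rfl, rfl⟩)
        · exact T.refl x
        · exact hb
        · exact hi
        · exact hi
    -- key closure properties of T
    have TL1 : T.rel ⊥ ⊤ → ∀ i, T.rel ⊥ (mid i) := by
      intro hb i
      exact T.restrict ⊥ ⊤ (mid i) ⊥ hb le_top le_rfl bot_le
        (fun v hv _ _ => le_bot_iff.mp hv)
    have TL2 : ∀ i, T.rel (mid i) ⊤ → ∀ j, j ≠ i → T.rel ⊥ (mid j) := by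
      intro i hi j hj
      refine T.restrict (mid i) ⊤ (mid j) ⊥ hi le_top bot_le bot_le ?_
      intro v hv1 hv2 _
      rcases hlemid v i hv1 with rfl | rfl
      · rfl
      · exact absurd (hmm i j hv2) (fun h => hj h.symm)
    by_cases hb : T.rel ⊥ ⊤
    · -- code : inl B
      refine ⟨Sum.inl (Finset.univ.filter fun i => T.rel (mid i) ⊤), ?_⟩
      apply TransferSystemPoset.ext'_s18
      conv_rhs => rw [hTrel]
      apply auxRel_congr
      · exact (Set.eq_univ_of_forall fun i => TL1 hb i).symm
      · exact ⟨fun _ => hb, fun _ => trivial⟩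
      · ext i; simp [cB, hBT]
    · by_cases hBe : ∃ i, T.rel (mid i) ⊤
      · -- code : inr (inr i)
        obtain ⟨i, hi⟩ := hBe
        refine ⟨Sum.inr (Sum.inr i), ?_⟩
        apply TransferSystemPoset.ext'_s18
        conv_rhs => rw [hTrel]
        apply auxRel_congr
        · -- {i}ᶜ = AT
          ext j
          simp only [cA, Set.mem_compl_iff, Set.mem_singleton_iff, hAT,
            Set.mem_setOf_eq]
          constructor
          · intro hj; exact TL2 i hi j hj
          · intro hj
            rintro rfl
            exact hb (T.trans _ _ _ hj hi)
        · exact ⟨fun h => absurd h id, fun h => absurd h hb⟩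
        · -- {i} = BT
          ext j
          simp only [cB, Set.mem_singleton_iff, hBT, Set.mem_setOf_eq]
          constructor
          · rintro rfl; exact hi
          · intro hj
            by_contra hne
            exact hb (T.trans _ _ _ (TL2 j hj i fun h => hne h.symm) hi)
      · -- code : inr (inl A)
        refine ⟨Sum.inr (Sum.inl (Finset.univ.filter fun i => T.rel ⊥ (mid i))), ?_⟩
        apply TransferSystemPoset.ext'_s18
        conv_rhs => rw [hTrel]
        apply auxRel_congr
        · ext i; simp [cA, hAT]
        · exact ⟨fun h => absurd h id, fun h => absurd h hb⟩
        · ext i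
          simp only [cB, Set.mem_empty_iff_false, hBT, Set.mem_setOf_eq,
            false_iff]
          exact fun h => hBe ⟨i, h⟩
  -- conclude
  have hcard : Nat.card (TransferSystemPoset F) = Nat.card (Finset (Fin n) ⊕ Finset (Fin n) ⊕ Fin n) :=
    Nat.card_congr (Equiv.ofBijective f ⟨hfinj, hfsurj⟩).symm
  rw [hcard]
  have : Nat.card (Finset (Fin n) ⊕ Finset (Fin n) ⊕ Fin n) = 2 ^ n + (2 ^ n + n) := by
    simp [Nat.card_eq_fintype_card, Fintype.card_finset]
  rw [this, pow_succ]
  ring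
end
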